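/- arXiv:2106.15260 — 8 statements merged into one kernel-verified Lean document; each statement's English description precedes it below -/
import Mathlib

section
/- Carlitz's identity: for all nonnegative integers m and n, (-1)^m · ∑_{k=0}^m C(m,k) · B_{n+k} = (-1)^n · ∑_{k=0}^n C(n,k) · B_{m+k}. -/
open Finset

private def S (m n : ℕ) : ℚ := ∑ k ∈ Finset.range (m + 1), (m.choose k : ℚ) * bernoulli (n + k)

private lemma S_rec (m n : ℕ) : S (m + 1) n = S m n + S m (n + 1) := by
  have h1 : S (m + 1) n
      = (∑ k ∈ range (m + 1), ((m + 1).choose (k + 1) : ℚ) * bernoulli (n + (k + 1)))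
        + bernoulli n := by
    rw [S, sum_range_succ']
    simp
  have h2 : ∀ k, ((m + 1).choose (k + 1) : ℚ) = m.choose k + m.choose (k + 1) := by
    intro k
    rw [Nat.choose_succ_succ]
    push_cast
    ring
  rw [h1]
  have h3 : (∑ k ∈ range (m + 1), ((m + 1).choose (k + 1) : ℚ) * bernoulli (n + (k + 1)))
      = (∑ k ∈ range (m + 1), (m.choose k : ℚ) * bernoulli (n + 1 + k))
        + ∑ k ∈ range (m + 1), (m.choose (k + 1) : ℚ) * bernoulli (n + (k + 1)) := by
    rw [← sum_add_distrib]
    apply sum_congr rfl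
    intro k _
    rw [h2 k]
    have : n + 1 + k = n + (k + 1) := by omega
    rw [this]; ring
  rw [h3]
  have h4 : (∑ k ∈ range (m + 1), (m.choose (k + 1) : ℚ) * bernoulli (n + (k + 1)))
      = ∑ k ∈ range m, (m.choose (k + 1) : ℚ) * bernoulli (n + (k + 1)) := by
    rw [sum_range_succ, Nat.choose_succ_self]
    simp
  have h5 : S m n = (∑ k ∈ range m, (m.choose (k + 1) : ℚ) * bernoulli (n + (k + 1)))
      + bernoulli n := by
    rw [S, sum_range_succ']
    simp
  rw [h4, show S m (n + 1) = ∑ k ∈ range (m + 1), (m.choose k : ℚ) * bernoulli (n + 1 + k)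
    from rfl, h5]
  ring

private lemma S_base (n : ℕ) : S n 0 = bernoulli' n := by
  rw [S]
  simp only [zero_add]
  rw [sum_range_succ, sum_bernoulli, Nat.choose_self]
  by_cases h : n = 1
  · subst h; norm_num [bernoulli_one, bernoulli'_one]
  · rw [bernoulli_eq_bernoulli'_of_ne_one h]; simp [h]

private lemma G_symm (m : ℕ) : ∀ n, (-1 : ℚ) ^ m * S m n = (-1 : ℚ) ^ n * S n m := by
  induction m with
  | zero =>
    intro n
    have l : S 0 n = bernoulli n := by simp [S]
    simp only [pow_zero, one_mul, S_base, bernoulli'_eq_bernoulli, l]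
    rw [← mul_assoc, ← pow_add, Even.neg_one_pow ⟨n, rfl⟩, one_mul]
  | succ m ih =>
    intro n
    have e1 := S_rec m n
    have e2 := S_rec n m
    have h1 := ih n
    have h2 := ih (n + 1)
    rw [e1]
    linear_combination -h1 - h2 + (-1 : ℚ) ^ n * e2

theorem carlitz_identity (m n : ℕ) :
    (-1 : ℚ) ^ m * ∑ k ∈ Finset.range (m + 1), (m.choose k : ℚ) * bernoulli (n + k) =
      (-1 : ℚ) ^ n * ∑ k ∈ Finset.range (n + 1), (n.choose k : ℚ) * bernoulli (m + k) := by
  exact G_symm m n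
end

section
/- Let K ≥ 2 be an integer. Define the (K-1)×(K-1) matrices P and Q by P_{s,r} = (2/(2s-1)) · ∑_{n=0}^{2K-2s} C(2r-1, 2K-2s-n+1) · C(n+2s-2, n) · B_n and Q_{s,r} = -(2/(2s-1)) · ∑_{n=0}^{2K-2s} C(2K-2r, 2K-2s-n+1) · C(n+2s-2, n) · B_n, for 1 ≤ r, s ≤ K-1. Then P = Q. -/
open Finset

namespace PQaux

def gch (x : ℚ) : ℕ → ℚ
  | 0 => 1
  | j+1 => gch x j * (x - j) / (j+1)

@[simp] lemma gch_zero (x : ℚ) : gch x 0 = 1 := rfl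

lemma gch_succ (x : ℚ) (j : ℕ) : gch x (j+1) = gch x j * (x - j) / (j+1) := rfl

lemma gch_succ_left (x : ℚ) (j : ℕ) : gch x (j+1) = x * gch (x-1) j / (j+1) := by
  induction j with
  | zero => simp [gch_succ]
  | succ j ih =>
    have hj : (j:ℚ) + 1 ≠ 0 := by positivity
    have hj2 : (j:ℚ) + 2 ≠ 0 := by positivity
    rw [gch_succ x (j+1), ih, gch_succ (x-1) j]
    push_cast
    field_simp
    ring

lemma gch_pascal (x : ℚ) (j : ℕ) : gch x (j+1) = gch (x-1) (j+1) + gch (x-1) j := by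
  have hj : (j:ℚ) + 1 ≠ 0 := by positivity
  rw [gch_succ_left, gch_succ]
  field_simp
  ring

lemma gch_nat (n j : ℕ) : gch (n:ℚ) j = n.choose j := by
  induction j with
  | zero => simp
  | succ j ih =>
    rw [gch_succ, ih]
    have hj : (j:ℚ) + 1 ≠ 0 := by positivity
    rcases le_or_gt j n with h | h
    · have hh := Nat.choose_succ_right_eq n j
      have hcast : (n.choose (j+1) : ℚ) * (j+1) = (n.choose j : ℚ) * ((n:ℚ) - j) := by
        have := congrArg (fun t : ℕ => (t : ℚ)) hh
        push_cast [h] at this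
        convert this using 2
      rw [div_eq_iff hj]
      push_cast
      linarith [hcast]
    · rw [Nat.choose_eq_zero_of_lt h, Nat.choose_eq_zero_of_lt (by omega)]
      simp

lemma gch_reflect (j : ℕ) (x : ℚ) : gch x j = (-1)^j * gch ((j:ℚ) - 1 - x) j := by
  induction j generalizing x with
  | zero => simp
  | succ j ih =>
    have hj : (j:ℚ) + 1 ≠ 0 := by positivity
    have h2 : gch (((j:ℚ)+1) - 1 - x) (j+1)
        = (((j:ℚ)+1) - 1 - x) * gch ((((j:ℚ)+1) - 1 - x) - 1) j / (j+1) := gch_succ_left _ j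
    have h3 : (((j:ℚ)+1) - 1 - x) - 1 = (j:ℚ) - 1 - x := by ring
    rw [gch_succ, ih x]
    push_cast
    rw [h2, h3]
    field_simp
    ring

lemma gch_down_one (x : ℚ) (J : ℕ) :
    gch (x - 1) J = ∑ i ∈ range (J+1), (-1)^i * gch x (J - i) := by
  induction J with
  | zero => simp
  | succ J ih =>
    have hp : gch (x-1) (J+1) = gch x (J+1) - gch (x-1) J := by
      rw [gch_pascal x J]; ring
    rw [hp, ih, Finset.sum_range_succ' _ (J+1)]
    simp only [Nat.succ_sub_succ, pow_succ, pow_zero, one_mul, Nat.sub_zero]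
    have hneg : ∑ i ∈ range (J+1), (-1:ℚ)^i * -1 * gch x (J - i)
         = -∑ i ∈ range (J+1), (-1:ℚ)^i * gch x (J - i) := by
      rw [← Finset.sum_neg_distrib]; exact Finset.sum_congr rfl fun i _ => by ring
    rw [hneg]; ring

lemma hst (c j : ℕ) : ∑ k ∈ range (j+1), (c+k).choose k = (c+j+1).choose j := by
  induction j with
  | zero => simp
  | succ j ih =>
    rw [Finset.sum_range_succ, ih, ← Nat.add_assoc c j 1,
      Nat.choose_succ_succ (c+j+1) j]

end PQaux

namespace PQaux2
open PQaux

lemma gch_down (c : ℕ) (x : ℚ) (J : ℕ) :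
    gch (x - ((c:ℚ)+1)) J
      = ∑ k ∈ range (J+1), (-1)^k * ((c+k).choose k : ℚ) * gch x (J-k) := by
  induction c generalizing x with
  | zero =>
    simp only [Nat.cast_zero, zero_add, Nat.choose_self, Nat.cast_one, mul_one]
    exact gch_down_one x J
  | succ c ih =>
    have harg : x - ((↑(c+1):ℚ)+1) = (x - 1) - ((c:ℚ)+1) := by push_cast; ring
    rw [harg, ih (x-1)]
    have step1 : ∑ k ∈ range (J+1), (-1:ℚ)^k * ((c+k).choose k : ℚ) * gch (x-1) (J-k)
        = ∑ k ∈ range (J+1), ∑ j ∈ Finset.Ico k (J+1),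
            (-1:ℚ)^k * ((c+k).choose k : ℚ) * ((-1)^(j-k) * gch x (J-j)) := by
      refine Finset.sum_congr rfl fun k hk => ?_
      have hkJ : k ≤ J := by simpa [Nat.lt_succ_iff] using hk
      rw [gch_down_one x (J-k), Finset.mul_sum, Finset.sum_Ico_eq_sum_range]
      have h1 : J + 1 - k = J - k + 1 := by omega
      rw [h1]
      refine Finset.sum_congr rfl fun i hi => ?_
      have h2 : k + i - k = i := by omega
      have h3 : J - (k + i) = J - k - i := by omega
      rw [h2, h3]
    rw [step1, Finset.range_eq_Ico, Finset.sum_Ico_Ico_comm]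
    refine Finset.sum_congr rfl fun j hj => ?_
    have hjJ : j ≤ J := by simp only [Finset.mem_Ico] at hj; omega
    rw [← Finset.range_eq_Ico]
    have inner : ∑ k ∈ range (j+1), (-1:ℚ)^k * ((c+k).choose k : ℚ) * ((-1)^(j-k) * gch x (J-j))
        = (-1:ℚ)^j * (((c+j+1).choose j : ℕ) : ℚ) * gch x (J-j) := by
      rw [← hst c j]
      push_cast
      rw [Finset.mul_sum, Finset.sum_mul]
      refine Finset.sum_congr rfl fun k hk => ?_
      have hkj : k ≤ j := by simpa [Nat.lt_succ_iff] using hk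
      have hsgn : (-1:ℚ)^k * (-1)^(j-k) = (-1)^j := by
        rw [← pow_add]; congr 1; omega
      calc (-1:ℚ)^k * ((c+k).choose k : ℚ) * ((-1)^(j-k) * gch x (J-j))
          = ((-1:ℚ)^k * (-1)^(j-k)) * ((c+k).choose k : ℚ) * gch x (J-j) := by ring
        _ = (-1:ℚ)^j * ((c+k).choose k : ℚ) * gch x (J-j) := by rw [hsgn]
    rw [inner]
    have : c + 1 + j = c + j + 1 := by omega
    rw [this]

lemma trin (c j n : ℕ) (h : n ≤ j) :
    ((n+c).choose n : ℚ) * ((c+j).choose (j-n) : ℚ)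
      = ((c+j).choose j : ℚ) * (j.choose n : ℚ) := by
  rw [show n + c = c + n by omega]
  rw [Nat.cast_choose ℚ (show n ≤ c+n by omega),
      Nat.cast_choose ℚ (show j-n ≤ c+j by omega),
      Nat.cast_choose ℚ (show j ≤ c+j by omega),
      Nat.cast_choose ℚ h]
  rw [show c+n-n = c by omega, show c+j-(j-n) = c+n by omega, show c+j-j = c by omega]
  have f1 := Nat.factorial_ne_zero n
  have f2 := Nat.factorial_ne_zero c
  have f3 := Nat.factorial_ne_zero (j-n)
  have f4 := Nat.factorial_ne_zero (c+n)
  have f5 := Nat.factorial_ne_zero j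
  field_simp

lemma sign_bern (j : ℕ) :
    (-1:ℚ)^j * (bernoulli j + if j = 1 then 1 else 0) = bernoulli j := by
  rcases Nat.even_or_odd j with he | ho
  · have h1 : j ≠ 1 := by rintro rfl; exact (Nat.not_even_one) he
    rw [if_neg h1, he.neg_one_pow]; ring
  · rcases eq_or_ne j 1 with rfl | hne
    · norm_num [bernoulli_one]
    · have hb : bernoulli j = 0 := by
        rw [bernoulli_eq_bernoulli'_of_ne_one hne]
        exact bernoulli'_eq_zero_of_odd ho (by rcases ho with ⟨k, rfl⟩; omega)
      rw [hb, if_neg hne]; ring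

end PQaux2

namespace PQaux3
open PQaux PQaux2

lemma key (m c a b : ℕ) (hm : Odd m) (hab : a + b = m + c) :
    ∑ n ∈ range (m+1), (b.choose (m-n) : ℚ) * ((n+c).choose n : ℚ) * bernoulli n
      = - ∑ n ∈ range (m+1), (a.choose (m-n) : ℚ) * ((n+c).choose n : ℚ) * bernoulli n := by
  have hm2 : m % 2 = 1 := Nat.odd_iff.mp hm
  have habq : (a:ℚ) + (b:ℚ) = (m:ℚ) + (c:ℚ) := by exact_mod_cast congrArg (Nat.cast (R := ℚ)) hab
  have stepA : ∀ n ∈ range (m+1),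
      (b.choose (m-n) : ℚ) * ((n+c).choose n : ℚ) * bernoulli n
        = ∑ j ∈ Finset.Ico n (m+1),
            (-(-1:ℚ)^j) * (((n+c).choose n : ℚ) * ((c+j).choose (j-n) : ℚ))
              * bernoulli n * (a.choose (m-j) : ℚ) := by
    intro n hn
    have hnm : n ≤ m := by simpa [Nat.lt_succ_iff] using hn
    have e1 : (b.choose (m-n) : ℚ) = gch (b:ℚ) (m-n) := (gch_nat b (m-n)).symm
    have e2 : gch (b:ℚ) (m-n) = (-1)^(m-n) * gch ((a:ℚ) - (((c+n:ℕ):ℚ)+1)) (m-n) := by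
      rw [gch_reflect (m-n) (b:ℚ)]
      congr 2
      push_cast [hnm]
      linarith [habq]
    have e3 : gch ((a:ℚ) - (((c+n:ℕ):ℚ)+1)) (m-n)
        = ∑ k ∈ range (m-n+1), (-1:ℚ)^k * ((c+n+k).choose k : ℚ) * (a.choose (m-n-k) : ℚ) := by
      rw [gch_down (c+n) (a:ℚ) (m-n)]
      exact Finset.sum_congr rfl fun k _ => by rw [gch_nat]
    rw [e1, e2, e3, Finset.sum_Ico_eq_sum_range, show m+1-n = m-n+1 by omega,
      Finset.mul_sum, Finset.sum_mul, Finset.sum_mul]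
    refine Finset.sum_congr rfl fun i hi => ?_
    have him : i ≤ m - n := by simpa [Nat.lt_succ_iff] using hi
    have h4 : n + i - n = i := by omega
    have h5 : m - (n+i) = m - n - i := by omega
    have hsgn : (-1:ℚ)^(m-n) * (-1)^i = -(-1:ℚ)^(n+i) := by
      rw [← pow_add]
      rcases Nat.even_or_odd (n+i) with hp | hp
      · have ho : Odd (m-n+i) := by rw [Nat.odd_iff]; rw [Nat.even_iff] at hp; omega
        rw [ho.neg_one_pow, hp.neg_one_pow]
      · have ho : Even (m-n+i) := by rw [Nat.even_iff]; rw [Nat.odd_iff] at hp; omega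
        rw [ho.neg_one_pow, hp.neg_one_pow]; norm_num
    rw [h4, h5, ← hsgn]
    ring
  calc ∑ n ∈ range (m+1), (b.choose (m-n) : ℚ) * ((n+c).choose n : ℚ) * bernoulli n
      = ∑ n ∈ range (m+1), ∑ j ∈ Finset.Ico n (m+1),
          (-(-1:ℚ)^j) * (((n+c).choose n : ℚ) * ((c+j).choose (j-n) : ℚ))
            * bernoulli n * (a.choose (m-j) : ℚ) := Finset.sum_congr rfl stepA
    _ = ∑ j ∈ range (m+1), ∑ n ∈ range (j+1),
          (-(-1:ℚ)^j) * (((n+c).choose n : ℚ) * ((c+j).choose (j-n) : ℚ))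
            * bernoulli n * (a.choose (m-j) : ℚ) := by
        rw [Finset.range_eq_Ico, Finset.sum_Ico_Ico_comm]
        simp only [Finset.range_eq_Ico]
    _ = ∑ j ∈ range (m+1), -((a.choose (m-j) : ℚ) * ((j+c).choose j : ℚ) * bernoulli j) := by
        refine Finset.sum_congr rfl fun j hj => ?_
        have inner1 : ∀ n ∈ range (j+1),
            (-(-1:ℚ)^j) * (((n+c).choose n : ℚ) * ((c+j).choose (j-n) : ℚ))
              * bernoulli n * (a.choose (m-j) : ℚ)
            = ((-(-1:ℚ)^j) * ((c+j).choose j : ℚ) * (a.choose (m-j) : ℚ))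
                * ((j.choose n : ℚ) * bernoulli n) := by
          intro n hn
          have hnj : n ≤ j := by simpa [Nat.lt_succ_iff] using hn
          rw [trin c j n hnj]
          ring
        rw [Finset.sum_congr rfl inner1, ← Finset.mul_sum]
        have hs : ∑ n ∈ range (j+1), (j.choose n : ℚ) * bernoulli n
            = bernoulli j + (if j = 1 then 1 else 0) := by
          rw [Finset.sum_range_succ, sum_bernoulli]
          simp [Nat.choose_self]
          ring
        rw [hs, show c + j = j + c by omega]
        linear_combination (-(((j+c).choose j : ℚ) * (a.choose (m-j) : ℚ))) * sign_bern j
    _ = - ∑ n ∈ range (m+1), (a.choose (m-n) : ℚ) * ((n+c).choose n : ℚ) * bernoulli n := by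
        rw [← Finset.sum_neg_distrib]

end PQaux3





theorem P_eq_Q (K : ℕ) (hK : 2 ≤ K)
    (P Q : Matrix (Fin (K - 1)) (Fin (K - 1)) ℚ)
    (hP : ∀ s r : Fin (K - 1),
      P s r = (2 / (2 * ((s : ℕ) + 1 : ℚ) - 1)) *
        ∑ n ∈ Finset.range (2 * K - 2 * ((s : ℕ) + 1) + 1),
          ((2 * ((r : ℕ) + 1) - 1).choose (2 * K - 2 * ((s : ℕ) + 1) - n + 1) : ℚ) *
            ((n + 2 * ((s : ℕ) + 1) - 2).choose n : ℚ) * bernoulli n)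
    (hQ : ∀ s r : Fin (K - 1),
      Q s r = -(2 / (2 * ((s : ℕ) + 1 : ℚ) - 1)) *
        ∑ n ∈ Finset.range (2 * K - 2 * ((s : ℕ) + 1) + 1),
          ((2 * K - 2 * ((r : ℕ) + 1)).choose (2 * K - 2 * ((s : ℕ) + 1) - n + 1) : ℚ) *
            ((n + 2 * ((s : ℕ) + 1) - 2).choose n : ℚ) * bernoulli n) :
    P = Q := by
  ext s r
  rw [hP s r, hQ s r]
  have hs2 : (s:ℕ) < K - 1 := s.2
  have hr2 : (r:ℕ) < K - 1 := r.2
  set Sn := (s:ℕ) + 1 with hSn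
  set Rn := (r:ℕ) + 1 with hRn
  set m := 2*K - 2*Sn + 1 with hm
  set c := 2*Sn - 2 with hc
  set a := 2*Rn - 1 with ha
  set b := 2*K - 2*Rn with hb
  have hmo : Odd m := ⟨K - Sn, by omega⟩
  have hab : a + b = m + c := by omega
  have hBm : bernoulli m = 0 := by
    rw [bernoulli_eq_bernoulli'_of_ne_one (by omega)]
    exact bernoulli'_eq_zero_of_odd hmo (by omega)
  have ext1 : ∀ y : ℕ,
      ∑ n ∈ Finset.range m,
          (y.choose (2*K - 2*Sn - n + 1) : ℚ) * ((n + 2*Sn - 2).choose n : ℚ) * bernoulli n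
      = ∑ n ∈ Finset.range (m+1),
          (y.choose (m-n) : ℚ) * ((n+c).choose n : ℚ) * bernoulli n := by
    intro y
    rw [Finset.sum_range_succ _ m, hBm, mul_zero, add_zero]
    refine Finset.sum_congr rfl fun n hn => ?_
    have hnm : n < m := by simpa using hn
    rw [show 2*K - 2*Sn - n + 1 = m - n by omega, show n + 2*Sn - 2 = n + c by omega]
  rw [ext1 a, ext1 b, PQaux3.key m c a b hmo hab]
  ring
end

section
/- Let K ≥ 2 be an integer. Define the (K-1)×(K-1) matrix A by A_{r,s} = C(2K-2s, 2r-1) + C(2K-2s, 2K-2r), and the matrix P by P_{s,r} = (2/(2s-1)) · ∑_{n=0}^{2K-2s} C(2r-1, 2K-2s-n+1) · C(n+2s-2, n) · B_n, for 1 ≤ r, s ≤ K-1. Then P·A equals the identity matrix; in particular A is invertible with A^{-1} = P. -/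
open Finset

-- the weighted Bernoulli numbers
def bb (w n : ℕ) : ℚ := ((n + w).choose n : ℚ) * bernoulli n

def phi (w a c : ℕ) : ℚ := ∑ n ∈ Finset.range (c+1), bb w n * ((a.choose (c - n)) : ℚ)

lemma bernoulli_odd_zero {n : ℕ} (h : Odd n) (h1 : n ≠ 1) : bernoulli n = 0 := by
  rw [bernoulli_eq_bernoulli'_of_ne_one h1]
  exact bernoulli'_eq_zero_of_odd h (by rcases h with ⟨k,rfl⟩; omega)

lemma bb_odd_zero {w n : ℕ} (h : Odd n) (h1 : n ≠ 1) : bb w n = 0 := by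
  simp [bb, bernoulli_odd_zero h h1]

lemma choose_trinomial (w c n : ℕ) (h : n ≤ c) :
    (n + w).choose n * ((w + c).choose (c - n)) = (w + c).choose c * c.choose n := by
  have h1 : (w + c).choose (c - n) = (w + c).choose (w + n) :=
    Nat.choose_symm_of_eq_add (by omega)
  have h2 : (w + c).choose (w + n) * (w + n).choose n
      = (w + c).choose n * ((w + c - n).choose (w + n - n)) :=
    Nat.choose_mul (by omega)
  have h3 : (w + c).choose c * c.choose n = (w + c).choose n * ((w + c - n).choose (c - n)) :=
    Nat.choose_mul h
  have h4 : (w + c - n).choose (w + n - n) = (w + c - n).choose (c - n) := by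
    rw [show w + n - n = w from by omega]
    exact Nat.choose_symm_of_eq_add (by omega)
  rw [h1, h3, show (n+w).choose n = (w+n).choose n from by rw [Nat.add_comm], mul_comm, h2, h4]

lemma phi_c_zero (w a : ℕ) : phi w a 0 = 1 := by
  simp [phi, bb]

lemma phi_a_zero (w c : ℕ) : phi w 0 c = ((c + w).choose c : ℚ) * bernoulli c := by
  rw [phi, Finset.sum_eq_single c]
  · simp [bb]
  · intro n hn hne
    rw [Finset.mem_range] at hn
    rw [Nat.choose_eq_zero_of_lt (by omega)]
    simp
  · intro h; simp at h

lemma phi_top (w c : ℕ) :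
    phi w (w + c) c = ((w + c).choose c : ℚ) * (bernoulli c + if c = 1 then 1 else 0) := by
  have step : ∀ n ∈ Finset.range (c+1),
      bb w n * (((w + c).choose (c - n) : ℕ) : ℚ)
        = ((w + c).choose c : ℚ) * (((c.choose n : ℕ) : ℚ) * bernoulli n) := by
    intro n hn
    rw [Finset.mem_range] at hn
    have h0 := choose_trinomial w c n (by omega)
    have h0q : (((n + w).choose n : ℕ) : ℚ) * (((w + c).choose (c - n) : ℕ) : ℚ)
        = (((w + c).choose c : ℕ) : ℚ) * ((c.choose n : ℕ) : ℚ) := by exact_mod_cast h0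
    rw [bb]
    linear_combination bernoulli n * h0q
  rw [phi, Finset.sum_congr rfl step, ← Finset.mul_sum]
  congr 1
  rw [Finset.sum_range_succ, Nat.choose_self]
  have := sum_bernoulli c
  rw [this]
  simp [add_comm]

lemma phi_succ (w a c : ℕ) (hc : 1 ≤ c) :
    phi w (a + 1) c = phi w a c + phi w a (c - 1) := by
  obtain ⟨d, rfl⟩ : ∃ d, c = d + 1 := ⟨c - 1, by omega⟩
  simp only [Nat.add_sub_cancel]
  rw [phi, phi, Finset.sum_range_succ, Finset.sum_range_succ (n := d + 1)]
  have key : ∀ n ∈ Finset.range (d+1),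
      bb w n * (((a+1).choose (d + 1 - n) : ℕ) : ℚ)
        = bb w n * ((a.choose (d + 1 - n) : ℕ) : ℚ) + bb w n * ((a.choose (d - n) : ℕ) : ℚ) := by
    intro n hn
    rw [Finset.mem_range] at hn
    rw [show d + 1 - n = (d - n) + 1 from by omega, Nat.choose_succ_succ']
    push_cast
    ring
  rw [Finset.sum_congr rfl key, Finset.sum_add_distrib]
  simp only [Nat.sub_self, Nat.choose_zero_right]
  rw [phi]
  ring

lemma phi_reflect (w : ℕ) : ∀ a b c : ℕ, a + b = w + c →
    phi w a c = (-1 : ℚ) ^ c * phi w b c := by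
  intro a
  induction a with
  | zero =>
    intro b c h
    rw [phi_a_zero, show b = w + c from by omega, phi_top]
    rcases Nat.even_or_odd c with he | ho
    · have h1 : c ≠ 1 := by rintro rfl; exact (Nat.not_even_one) he
      rw [if_neg h1, Even.neg_one_pow he, add_zero, one_mul, Nat.add_comm c w]
    · rcases eq_or_ne c 1 with rfl | h1
      · norm_num [bernoulli_one]; ring
      · rw [bernoulli_odd_zero ho h1, if_neg h1, Odd.neg_one_pow ho]
        simp
  | succ a ih =>
    intro b c h
    rcases Nat.eq_zero_or_pos c with rfl | hc
    · rw [phi_c_zero, phi_c_zero]; norm_num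
    obtain ⟨d, rfl⟩ : ∃ d, c = d + 1 := ⟨c - 1, by omega⟩
    rw [phi_succ w a (d+1) (by omega)]
    simp only [Nat.add_sub_cancel]
    rw [ih (b+1) (d+1) (by omega), ih b d (by omega), phi_succ w b (d+1) (by omega)]
    simp only [Nat.add_sub_cancel]
    ring

lemma alt_choose_q (N : ℕ) :
    ∑ i ∈ Finset.range (N+1), (-1 : ℚ)^i * (N.choose i : ℕ) = if N = 0 then 1 else 0 := by
  have h := add_pow (-1 : ℚ) 1 N
  simp only [one_pow, mul_one, neg_add_cancel] at h
  rw [← h]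
  rcases Nat.eq_zero_or_pos N with rfl | hN
  · simp
  · rw [if_neg (by omega), zero_pow (by omega)]

lemma alt1 (m j : ℕ) :
    ∑ k ∈ Finset.range (m+1), (-1 : ℚ)^k * (m.choose k : ℕ) * (k.choose j : ℕ)
      = if j = m then (-1 : ℚ)^m else 0 := by
  rcases le_or_gt j m with hj | hj
  · have hsub : Finset.Ico j (m+1) ⊆ Finset.range (m+1) := by
      rw [Finset.range_eq_Ico]; exact Finset.Ico_subset_Ico (by omega) le_rfl
    rw [← Finset.sum_subset hsub (by
      intro x hx hx2
      simp only [Finset.mem_range] at hx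
      simp only [Finset.mem_Ico, not_and, not_lt] at hx2
      have : x < j := by omega
      rw [Nat.choose_eq_zero_of_lt this]; simp)]
    rw [Finset.sum_Ico_eq_sum_range]
    have hm : m + 1 - j = (m - j) + 1 := by omega
    rw [hm]
    have key : ∀ i ∈ Finset.range ((m-j)+1),
        (-1 : ℚ)^(j+i) * (m.choose (j+i) : ℕ) * ((j+i).choose j : ℕ)
          = ((-1 : ℚ)^j * (m.choose j : ℕ)) * ((-1 : ℚ)^i * ((m-j).choose i : ℕ)) := by
      intro i hi
      rw [Finset.mem_range] at hi
      have h1 : m.choose (j+i) * (j+i).choose j = m.choose j * (m-j).choose (j+i-j) :=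
        Nat.choose_mul (by omega)
      rw [show j+i-j = i from by omega] at h1
      have h1q : ((m.choose (j+i) : ℕ) : ℚ) * ((j+i).choose j : ℕ)
          = ((m.choose j : ℕ) : ℚ) * ((m-j).choose i : ℕ) := by exact_mod_cast h1
      rw [pow_add]
      linear_combination ((-1:ℚ)^j * (-1:ℚ)^i) * h1q
    rw [Finset.sum_congr rfl key, ← Finset.mul_sum, alt_choose_q]
    rcases eq_or_lt_of_le hj with rfl | hlt
    · simp
    · rw [if_neg (by omega), if_neg (by omega)]; simp
  · rw [if_neg (by omega)]
    apply Finset.sum_eq_zero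
    intro k hk
    rw [Finset.mem_range] at hk
    rw [Nat.choose_eq_zero_of_lt (show k < j from by omega)]
    simp

lemma vandermonde_q (q k j : ℕ) :
    ((q + k).choose j : ℚ) = ∑ i ∈ Finset.range (j+1), (q.choose i : ℕ) * ((k.choose (j - i) : ℕ) : ℚ) := by
  have := Nat.add_choose_eq q k j
  rw [Finset.Nat.sum_antidiagonal_eq_sum_range_succ_mk] at this
  exact_mod_cast congrArg (fun x : ℕ => (x : ℚ)) this

lemma alt2 (N q j : ℕ) :
    ∑ k ∈ Finset.range (N+1), (-1 : ℚ)^k * (N.choose k : ℕ) * ((q+k).choose j : ℕ)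
      = if N ≤ j then (-1 : ℚ)^N * (q.choose (j - N) : ℕ) else 0 := by
  have step : ∀ k ∈ Finset.range (N+1),
      (-1 : ℚ)^k * (N.choose k : ℕ) * ((q+k).choose j : ℕ)
        = ∑ i ∈ Finset.range (j+1),
            (q.choose i : ℕ) * ((-1 : ℚ)^k * (N.choose k : ℕ) * (k.choose (j-i) : ℕ)) := by
    intro k _
    rw [vandermonde_q, Finset.mul_sum]
    exact Finset.sum_congr rfl fun i _ => by ring
  rw [Finset.sum_congr rfl step, Finset.sum_comm]
  have inner : ∀ i ∈ Finset.range (j+1),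
      ∑ k ∈ Finset.range (N+1),
          (q.choose i : ℚ) * ((-1 : ℚ)^k * (N.choose k : ℕ) * (k.choose (j-i) : ℕ))
        = (q.choose i : ℕ) * (if j - i = N then (-1 : ℚ)^N else 0) := by
    intro i _
    rw [← Finset.mul_sum, alt1]
  rw [Finset.sum_congr rfl inner]
  rcases le_or_gt N j with hN | hN
  · rw [if_pos hN, Finset.sum_eq_single (j - N)]
    · rw [if_pos (by omega)]; ring
    · intro i hi hne
      rw [Finset.mem_range] at hi
      rw [if_neg (by omega)]; simp
    · intro h
      exact absurd (Finset.mem_range.2 (by omega)) h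
  · rw [if_neg (by omega)]
    apply Finset.sum_eq_zero
    intro i hi
    rw [Finset.mem_range] at hi
    rw [if_neg (by omega)]
    simp

lemma even_split (f : ℕ → ℚ) (v : ℕ) :
    2 * ∑ i ∈ Finset.range (v+1), f (2*i)
      = ∑ k ∈ Finset.range (2*v+1), f k + ∑ k ∈ Finset.range (2*v+1), (-1)^k * f k := by
  induction v with
  | zero => simp; ring
  | succ v ih =>
    have h0 : ((-1:ℚ))^(2*v) = 1 := Even.neg_one_pow ⟨v, by omega⟩
    have h1 : ((-1:ℚ))^(2*v+1) = -1 := Odd.neg_one_pow ⟨v, by omega⟩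
    have h2 : ((-1:ℚ))^(2*v+1+1) = 1 := Even.neg_one_pow ⟨v+1, by omega⟩
    rw [show 2*(v+1)+1 = (2*v+1+1)+1 from by omega]
    simp only [Finset.sum_range_succ] at ih ⊢
    rw [h0] at ih
    rw [h0, h1, h2, show 2*(v+1) = 2*v+1+1 from by omega]
    linarith [ih]

lemma odd_split (f : ℕ → ℚ) (v : ℕ) :
    2 * ∑ i ∈ Finset.range v, f (2*i+1)
      = ∑ k ∈ Finset.range (2*v+1), f k - ∑ k ∈ Finset.range (2*v+1), (-1)^k * f k := by
  induction v with
  | zero => simp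
  | succ v ih =>
    have h0 : ((-1:ℚ))^(2*v) = 1 := Even.neg_one_pow ⟨v, by omega⟩
    have h1 : ((-1:ℚ))^(2*v+1) = -1 := Odd.neg_one_pow ⟨v, by omega⟩
    have h2 : ((-1:ℚ))^(2*v+1+1) = 1 := Even.neg_one_pow ⟨v+1, by omega⟩
    rw [show 2*(v+1)+1 = (2*v+1+1)+1 from by omega]
    simp only [Finset.sum_range_succ] at ih ⊢
    rw [h0] at ih
    rw [h0, h1, h2]
    linarith [ih]

lemma Rval (a b u v : ℕ) (huv : a + u = b + v) (j : ℕ) :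
    2 * (∑ ρ ∈ Finset.range (a+u), ((2*ρ+1).choose j : ℚ) *
          (((2*v).choose (2*ρ+1) : ℚ) + ((2*v).choose (2*(a+u)-2*ρ) : ℚ)))
      = (∑ k ∈ Finset.range (2*v+1), ((2*v).choose k : ℚ) *
            ((k.choose j : ℚ) + ((2*b+1+k).choose j : ℚ)))
        - (if j = 2*v then 1 else 0)
        + (if 2*v ≤ j then ((2*b+1).choose (j-2*v) : ℚ) else 0)
        - 2 * ((2*b+1+2*v).choose j : ℚ) := by
  have hsplit : ∀ ρ, ((2*ρ+1).choose j : ℚ) *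
          (((2*v).choose (2*ρ+1) : ℚ) + ((2*v).choose (2*(a+u)-2*ρ) : ℚ))
      = ((2*ρ+1).choose j : ℚ) * ((2*v).choose (2*ρ+1) : ℚ)
        + ((2*ρ+1).choose j : ℚ) * ((2*v).choose (2*(a+u)-2*ρ) : ℚ) := fun ρ => by ring
  rw [Finset.sum_congr rfl (fun ρ _ => hsplit ρ), Finset.sum_add_distrib]
  -- R1 part
  have hR1 : ∑ ρ ∈ Finset.range (a+u), ((2*ρ+1).choose j : ℚ) * ((2*v).choose (2*ρ+1) : ℚ)
      = ∑ ρ ∈ Finset.range v, ((2*ρ+1).choose j : ℚ) * ((2*v).choose (2*ρ+1) : ℚ) := by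
    symm
    apply Finset.sum_subset
    · intro x hx
      rw [Finset.mem_range] at hx ⊢
      omega
    · intro x hx hx2
      rw [Finset.mem_range] at hx hx2
      rw [Nat.choose_eq_zero_of_lt (show 2*v < 2*x+1 from by omega)]
      simp
  have hodd := odd_split (fun k => ((k.choose j : ℕ) : ℚ) * ((2*v).choose k : ℕ)) v
  have halt1 : ∑ k ∈ Finset.range (2*v+1),
      (-1:ℚ)^k * (((k.choose j : ℕ) : ℚ) * ((2*v).choose k : ℕ))
        = if j = 2*v then 1 else 0 := by
    have := alt1 (2*v) j
    rw [(Even.neg_one_pow ⟨v, by omega⟩ : ((-1:ℚ))^(2*v) = 1)] at this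
    rw [← this]
    exact Finset.sum_congr rfl fun k _ => by ring
  -- R2 part
  have hR2 : ∑ ρ ∈ Finset.range (a+u), ((2*ρ+1).choose j : ℚ) * ((2*v).choose (2*(a+u)-2*ρ) : ℚ)
      = ∑ i ∈ Finset.range v, ((2*v).choose (2*i) : ℚ) * ((2*b+1+2*i).choose j : ℚ) := by
    rw [show Finset.range (a+u) = Finset.Ico 0 (a+u) from by rw [Finset.range_eq_Ico]]
    rw [← Finset.sum_Ico_consecutive _ (Nat.zero_le b) (show b ≤ a+u from by omega)]
    have hzero : ∑ ρ ∈ Finset.Ico 0 b, ((2*ρ+1).choose j : ℚ) * ((2*v).choose (2*(a+u)-2*ρ) : ℚ) = 0 := by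
      apply Finset.sum_eq_zero
      intro x hx
      rw [Finset.mem_Ico] at hx
      rw [Nat.choose_eq_zero_of_lt (show 2*v < 2*(a+u)-2*x from by omega)]
      simp
    rw [hzero, zero_add, Finset.sum_Ico_eq_sum_range, show a+u-b = v from by omega]
    apply Finset.sum_congr rfl
    intro i hi
    rw [Finset.mem_range] at hi
    rw [show 2*(b+i)+1 = 2*b+1+2*i from by omega,
      show 2*(a+u)-2*(b+i) = 2*v-2*i from by omega,
      show (2*v).choose (2*v-2*i) = (2*v).choose (2*i) from Nat.choose_symm (by omega)]
    ring
  have heven := even_split (fun k => (((2*v).choose k : ℕ) : ℚ) * ((2*b+1+k).choose j : ℕ)) v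
  have halt2 : ∑ k ∈ Finset.range (2*v+1),
      (-1:ℚ)^k * ((((2*v).choose k : ℕ) : ℚ) * ((2*b+1+k).choose j : ℕ))
        = if 2*v ≤ j then ((2*b+1).choose (j-2*v) : ℚ) else 0 := by
    have := alt2 (2*v) (2*b+1) j
    rw [(Even.neg_one_pow ⟨v, by omega⟩ : ((-1:ℚ))^(2*v) = 1), one_mul] at this
    rw [← this]
    exact Finset.sum_congr rfl fun k _ => by ring
  -- the i = v term of the even part
  have hlast : ∑ i ∈ Finset.range (v+1), (((2*v).choose (2*i) : ℕ) : ℚ) * ((2*b+1+2*i).choose j : ℕ)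
      = (∑ i ∈ Finset.range v, ((2*v).choose (2*i) : ℚ) * ((2*b+1+2*i).choose j : ℚ))
        + ((2*b+1+2*v).choose j : ℚ) := by
    rw [Finset.sum_range_succ, Nat.choose_self]
    push_cast
    ring
  rw [hR1, hR2]
  rw [halt1] at hodd
  rw [halt2, hlast] at heven
  have hfg : ∑ k ∈ Finset.range (2*v+1), ((2*v).choose k : ℚ) *
        ((k.choose j : ℚ) + ((2*b+1+k).choose j : ℚ))
      = (∑ k ∈ Finset.range (2*v+1), ((k.choose j : ℕ) : ℚ) * ((2*v).choose k : ℕ))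
        + ∑ k ∈ Finset.range (2*v+1), (((2*v).choose k : ℕ) : ℚ) * ((2*b+1+k).choose j : ℕ) := by
    rw [← Finset.sum_add_distrib]
    exact Finset.sum_congr rfl fun k _ => by push_cast; ring
  rw [hfg]
  linarith [hodd, heven]

lemma main_sum (a b u v : ℕ) (hu : 1 ≤ u) (hv : 1 ≤ v) (huv : a + u = b + v) :
    ∑ ρ ∈ Finset.range (a+u),
        (∑ n ∈ Finset.range (2*u+1), ((2*ρ+1).choose (2*u+1-n) : ℚ) * bb (2*a) n)
          * (((2*v).choose (2*ρ+1) : ℚ) + ((2*v).choose (2*(a+u)-2*ρ) : ℚ))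
      = if a = b then (2*(a:ℚ)+1)/2 else 0 := by
  -- swap the sums
  have swap : ∑ ρ ∈ Finset.range (a+u),
        (∑ n ∈ Finset.range (2*u+1), ((2*ρ+1).choose (2*u+1-n) : ℚ) * bb (2*a) n)
          * (((2*v).choose (2*ρ+1) : ℚ) + ((2*v).choose (2*(a+u)-2*ρ) : ℚ))
      = ∑ n ∈ Finset.range (2*u+1), bb (2*a) n *
          ∑ ρ ∈ Finset.range (a+u), ((2*ρ+1).choose (2*u+1-n) : ℚ) *
            (((2*v).choose (2*ρ+1) : ℚ) + ((2*v).choose (2*(a+u)-2*ρ) : ℚ)) := by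
    calc ∑ ρ ∈ Finset.range (a+u),
        (∑ n ∈ Finset.range (2*u+1), ((2*ρ+1).choose (2*u+1-n) : ℚ) * bb (2*a) n)
          * (((2*v).choose (2*ρ+1) : ℚ) + ((2*v).choose (2*(a+u)-2*ρ) : ℚ))
        = ∑ ρ ∈ Finset.range (a+u), ∑ n ∈ Finset.range (2*u+1),
            bb (2*a) n * (((2*ρ+1).choose (2*u+1-n) : ℚ) *
              (((2*v).choose (2*ρ+1) : ℚ) + ((2*v).choose (2*(a+u)-2*ρ) : ℚ))) := by
          refine Finset.sum_congr rfl fun ρ _ => ?_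
          rw [Finset.sum_mul]
          exact Finset.sum_congr rfl fun n _ => by ring
      _ = ∑ n ∈ Finset.range (2*u+1), ∑ ρ ∈ Finset.range (a+u),
            bb (2*a) n * (((2*ρ+1).choose (2*u+1-n) : ℚ) *
              (((2*v).choose (2*ρ+1) : ℚ) + ((2*v).choose (2*(a+u)-2*ρ) : ℚ))) :=
          Finset.sum_comm
      _ = ∑ n ∈ Finset.range (2*u+1), bb (2*a) n *
            ∑ ρ ∈ Finset.range (a+u), ((2*ρ+1).choose (2*u+1-n) : ℚ) *
              (((2*v).choose (2*ρ+1) : ℚ) + ((2*v).choose (2*(a+u)-2*ρ) : ℚ)) := by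
          exact Finset.sum_congr rfl fun n _ => (Finset.mul_sum _ _ _).symm
  rw [swap]
  -- extend the sum by one zero term
  have hbbtop : bb (2*a) (2*u+1) = 0 := bb_odd_zero ⟨u, by omega⟩ (by omega)
  have hext : ∑ n ∈ Finset.range (2*u+1), bb (2*a) n *
          ∑ ρ ∈ Finset.range (a+u), ((2*ρ+1).choose (2*u+1-n) : ℚ) *
            (((2*v).choose (2*ρ+1) : ℚ) + ((2*v).choose (2*(a+u)-2*ρ) : ℚ))
      = ∑ n ∈ Finset.range (2*u+1+1), bb (2*a) n *
          ∑ ρ ∈ Finset.range (a+u), ((2*ρ+1).choose (2*u+1-n) : ℚ) *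
            (((2*v).choose (2*ρ+1) : ℚ) + ((2*v).choose (2*(a+u)-2*ρ) : ℚ)) := by
    symm
    rw [Finset.sum_range_succ, hbbtop, zero_mul, add_zero]
  rw [hext]
  -- apply Rval termwise, after multiplying by 2
  have key2 : 2 * ∑ n ∈ Finset.range (2*u+1+1), bb (2*a) n *
          ∑ ρ ∈ Finset.range (a+u), ((2*ρ+1).choose (2*u+1-n) : ℚ) *
            (((2*v).choose (2*ρ+1) : ℚ) + ((2*v).choose (2*(a+u)-2*ρ) : ℚ))
      = (∑ n ∈ Finset.range (2*u+1+1), bb (2*a) n *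
            ∑ k ∈ Finset.range (2*v+1), ((2*v).choose k : ℚ) *
              ((k.choose (2*u+1-n) : ℚ) + ((2*b+1+k).choose (2*u+1-n) : ℚ)))
        - (∑ n ∈ Finset.range (2*u+1+1), bb (2*a) n * (if 2*u+1-n = 2*v then (1:ℚ) else 0))
        + (∑ n ∈ Finset.range (2*u+1+1), bb (2*a) n *
            (if 2*v ≤ 2*u+1-n then ((2*b+1).choose (2*u+1-n-2*v) : ℚ) else 0))
        - 2 * (∑ n ∈ Finset.range (2*u+1+1), bb (2*a) n * ((2*b+1+2*v).choose (2*u+1-n) : ℚ)) := by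
    rw [Finset.mul_sum, ← Finset.sum_sub_distrib, ← Finset.sum_add_distrib,
      Finset.mul_sum, ← Finset.sum_sub_distrib]
    refine Finset.sum_congr rfl fun n _ => ?_
    have := Rval a b u v huv (2*u+1-n)
    calc 2 * (bb (2*a) n * ∑ ρ ∈ Finset.range (a+u), ((2*ρ+1).choose (2*u+1-n) : ℚ) *
            (((2*v).choose (2*ρ+1) : ℚ) + ((2*v).choose (2*(a+u)-2*ρ) : ℚ)))
        = bb (2*a) n * (2 * ∑ ρ ∈ Finset.range (a+u), ((2*ρ+1).choose (2*u+1-n) : ℚ) *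
            (((2*v).choose (2*ρ+1) : ℚ) + ((2*v).choose (2*(a+u)-2*ρ) : ℚ))) := by ring
      _ = bb (2*a) n * ((∑ k ∈ Finset.range (2*v+1), ((2*v).choose k : ℚ) *
              ((k.choose (2*u+1-n) : ℚ) + ((2*b+1+k).choose (2*u+1-n) : ℚ)))
            - (if 2*u+1-n = 2*v then 1 else 0)
            + (if 2*v ≤ 2*u+1-n then ((2*b+1).choose (2*u+1-n-2*v) : ℚ) else 0)
            - 2 * ((2*b+1+2*v).choose (2*u+1-n) : ℚ)) := by rw [this]
      _ = _ := by ring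
  -- the G-term vanishes
  have TG : ∑ n ∈ Finset.range (2*u+1+1), bb (2*a) n *
        ∑ k ∈ Finset.range (2*v+1), ((2*v).choose k : ℚ) *
          ((k.choose (2*u+1-n) : ℚ) + ((2*b+1+k).choose (2*u+1-n) : ℚ)) = 0 := by
    have hswap2 : ∑ n ∈ Finset.range (2*u+1+1), bb (2*a) n *
          ∑ k ∈ Finset.range (2*v+1), ((2*v).choose k : ℚ) *
            ((k.choose (2*u+1-n) : ℚ) + ((2*b+1+k).choose (2*u+1-n) : ℚ))
        = ∑ k ∈ Finset.range (2*v+1), ((2*v).choose k : ℚ) *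
            (phi (2*a) k (2*u+1) + phi (2*a) (2*b+1+k) (2*u+1)) := by
      calc ∑ n ∈ Finset.range (2*u+1+1), bb (2*a) n *
            ∑ k ∈ Finset.range (2*v+1), ((2*v).choose k : ℚ) *
              ((k.choose (2*u+1-n) : ℚ) + ((2*b+1+k).choose (2*u+1-n) : ℚ))
          = ∑ n ∈ Finset.range (2*u+1+1), ∑ k ∈ Finset.range (2*v+1),
              ((2*v).choose k : ℚ) * (bb (2*a) n * (k.choose (2*u+1-n) : ℚ)
                + bb (2*a) n * ((2*b+1+k).choose (2*u+1-n) : ℚ)) := by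
            refine Finset.sum_congr rfl fun n _ => ?_
            rw [Finset.mul_sum]
            exact Finset.sum_congr rfl fun k _ => by ring
        _ = ∑ k ∈ Finset.range (2*v+1), ∑ n ∈ Finset.range (2*u+1+1),
              ((2*v).choose k : ℚ) * (bb (2*a) n * (k.choose (2*u+1-n) : ℚ)
                + bb (2*a) n * ((2*b+1+k).choose (2*u+1-n) : ℚ)) := Finset.sum_comm
        _ = ∑ k ∈ Finset.range (2*v+1), ((2*v).choose k : ℚ) *
              (phi (2*a) k (2*u+1) + phi (2*a) (2*b+1+k) (2*u+1)) := by
            refine Finset.sum_congr rfl fun k _ => ?_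
            rw [← Finset.mul_sum, Finset.sum_add_distrib, phi, phi]
    rw [hswap2]
    have hrefl : ∀ k ∈ Finset.range (2*v+1),
        ((2*v).choose k : ℚ) * (phi (2*a) k (2*u+1) + phi (2*a) (2*b+1+k) (2*u+1))
          = ((2*v).choose k : ℚ) * phi (2*a) k (2*u+1)
            - ((2*v).choose k : ℚ) * phi (2*a) (2*v-k) (2*u+1) := by
      intro k hk
      rw [Finset.mem_range] at hk
      have := phi_reflect (2*a) (2*b+1+k) (2*v-k) (2*u+1) (by omega)
      rw [(Odd.neg_one_pow ⟨u, by omega⟩ : ((-1:ℚ))^(2*u+1) = -1)] at this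
      rw [this]
      ring
    rw [Finset.sum_congr rfl hrefl, Finset.sum_sub_distrib]
    have hrev : ∑ k ∈ Finset.range (2*v+1), ((2*v).choose k : ℚ) * phi (2*a) (2*v-k) (2*u+1)
        = ∑ k ∈ Finset.range (2*v+1), ((2*v).choose k : ℚ) * phi (2*a) k (2*u+1) := by
      rw [← Finset.sum_range_reflect
        (fun k => ((2*v).choose k : ℚ) * phi (2*a) k (2*u+1)) (2*v+1)]
      refine Finset.sum_congr rfl fun k hk => ?_
      rw [Finset.mem_range] at hk
      rw [show 2*v+1-1-k = 2*v-k from by omega,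
        show (2*v).choose (2*v-k) = (2*v).choose k from Nat.choose_symm (by omega)]
    rw [hrev, sub_self]
  -- the final term
  have T4 : ∑ n ∈ Finset.range (2*u+1+1), bb (2*a) n * ((2*b+1+2*v).choose (2*u+1-n) : ℚ) = 0 := by
    have : ∑ n ∈ Finset.range (2*u+1+1), bb (2*a) n * ((2*b+1+2*v).choose (2*u+1-n) : ℚ)
        = phi (2*a) (2*b+1+2*v) (2*u+1) := by rw [phi]
    rw [this, show 2*b+1+2*v = 2*a + (2*u+1) from by omega, phi_top,
      bernoulli_odd_zero ⟨u, by omega⟩ (by omega), if_neg (by omega)]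
    simp
  rcases le_or_gt v u with hvu | hvu
  · -- v ≤ u
    have Tdelta : ∑ n ∈ Finset.range (2*u+1+1), bb (2*a) n * (if 2*u+1-n = 2*v then (1:ℚ) else 0)
        = bb (2*a) (2*(u-v)+1) := by
      rw [Finset.sum_eq_single (2*(u-v)+1)]
      · rw [if_pos (show 2*u+1-(2*(u-v)+1) = 2*v from by omega), mul_one]
      · intro n hn hne
        rw [Finset.mem_range] at hn
        rw [if_neg (show ¬(2*u+1-n = 2*v) from by omega), mul_zero]
      · intro h
        exact absurd (Finset.mem_range.2 (by omega)) h
    have TA2 : ∑ n ∈ Finset.range (2*u+1+1), bb (2*a) n *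
          (if 2*v ≤ 2*u+1-n then ((2*b+1).choose (2*u+1-n-2*v) : ℚ) else 0)
        = ((2*a+(2*(u-v)+1)).choose (2*(u-v)+1) : ℚ) *
            (bernoulli (2*(u-v)+1) + if 2*(u-v)+1 = 1 then 1 else 0) := by
      have hsub : Finset.range (2*(u-v)+1+1) ⊆ Finset.range (2*u+1+1) :=
        Finset.range_subset_range.2 (by omega)
      rw [← Finset.sum_subset hsub (by
        intro n hn hn2
        rw [Finset.mem_range] at hn hn2
        rw [if_neg (show ¬(2*v ≤ 2*u+1-n) from by omega), mul_zero])]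
      have : ∑ n ∈ Finset.range (2*(u-v)+1+1), bb (2*a) n *
            (if 2*v ≤ 2*u+1-n then ((2*b+1).choose (2*u+1-n-2*v) : ℚ) else 0)
          = ∑ n ∈ Finset.range (2*(u-v)+1+1), bb (2*a) n *
              ((2*b+1).choose (2*(u-v)+1-n) : ℚ) := by
        refine Finset.sum_congr rfl fun n hn => ?_
        rw [Finset.mem_range] at hn
        rw [if_pos (show 2*v ≤ 2*u+1-n from by omega),
          show 2*u+1-n-2*v = 2*(u-v)+1-n from by omega]
      rw [this, show (∑ n ∈ Finset.range (2*(u-v)+1+1), bb (2*a) n *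
              ((2*b+1).choose (2*(u-v)+1-n) : ℚ)) = phi (2*a) (2*b+1) (2*(u-v)+1) from by rw [phi],
        show 2*b+1 = 2*a + (2*(u-v)+1) from by omega, phi_top]
    rcases eq_or_ne a b with rfl | hab
    · have huv' : u = v := by omega
      subst huv'
      rw [if_pos rfl]
      rw [Nat.sub_self] at Tdelta TA2
      have hd : bb (2*a) (2*0+1) = -(2*(a:ℚ)+1)/2 := by
        rw [bb]
        norm_num [bernoulli_one, Nat.choose_one_right]
        push_cast
        ring
      rw [hd] at Tdelta
      have ht : ((2*a+(2*0+1)).choose (2*0+1) : ℚ) *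
            (bernoulli (2*0+1) + if 2*0+1 = 1 then 1 else 0) = (2*(a:ℚ)+1)/2 := by
        norm_num [bernoulli_one, Nat.choose_one_right]
        push_cast
        ring
      rw [ht] at TA2
      rw [TG, Tdelta, TA2, T4] at key2
      linarith [key2]
    · have huv2 : v < u := by omega
      rw [if_neg hab]
      have hd : bb (2*a) (2*(u-v)+1) = 0 := bb_odd_zero ⟨u-v, by omega⟩ (by omega)
      have ht : ((2*a+(2*(u-v)+1)).choose (2*(u-v)+1) : ℚ) *
            (bernoulli (2*(u-v)+1) + if 2*(u-v)+1 = 1 then 1 else 0) = 0 := by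
        rw [bernoulli_odd_zero ⟨u-v, by omega⟩ (by omega), if_neg (by omega)]
        simp
      rw [hd] at Tdelta
      rw [ht] at TA2
      rw [TG, Tdelta, TA2, T4] at key2
      linarith [key2]
  · -- v > u : both middle terms vanish
    have hab : a ≠ b := by omega
    rw [if_neg hab]
    have Tdelta : ∑ n ∈ Finset.range (2*u+1+1), bb (2*a) n * (if 2*u+1-n = 2*v then (1:ℚ) else 0)
        = 0 := by
      apply Finset.sum_eq_zero
      intro n hn
      rw [if_neg (show ¬(2*u+1-n = 2*v) from by omega), mul_zero]
    have TA2 : ∑ n ∈ Finset.range (2*u+1+1), bb (2*a) n *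
          (if 2*v ≤ 2*u+1-n then ((2*b+1).choose (2*u+1-n-2*v) : ℚ) else 0) = 0 := by
      apply Finset.sum_eq_zero
      intro n hn
      rw [if_neg (show ¬(2*v ≤ 2*u+1-n) from by omega), mul_zero]
    rw [TG, Tdelta, TA2, T4] at key2
    linarith [key2]

theorem zagier_conjecture (K : ℕ) (hK : 2 ≤ K)
    (A P : Matrix (Fin (K - 1)) (Fin (K - 1)) ℚ)
    (hA : ∀ r s : Fin (K - 1),
      A r s = ((2 * K - 2 * ((s : ℕ) + 1)).choose (2 * ((r : ℕ) + 1) - 1) : ℚ) +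
        ((2 * K - 2 * ((s : ℕ) + 1)).choose (2 * K - 2 * ((r : ℕ) + 1)) : ℚ))
    (hP : ∀ s r : Fin (K - 1),
      P s r = (2 / (2 * ((s : ℕ) + 1 : ℚ) - 1)) *
        ∑ n ∈ Finset.range (2 * K - 2 * ((s : ℕ) + 1) + 1),
          ((2 * ((r : ℕ) + 1) - 1).choose (2 * K - 2 * ((s : ℕ) + 1) - n + 1) : ℚ) *
            ((n + 2 * ((s : ℕ) + 1) - 2).choose n : ℚ) * bernoulli n) :
    P * A = 1 := by
  ext s t
  rw [Matrix.mul_apply, Matrix.one_apply]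
  have hs : (s : ℕ) < K - 1 := s.isLt
  have ht : (t : ℕ) < K - 1 := t.isLt
  obtain ⟨u, hu1, hu2⟩ : ∃ u, 1 ≤ u ∧ (s:ℕ) + u = K - 1 := ⟨K-1-(s:ℕ), by omega, by omega⟩
  obtain ⟨v, hv1, hv2⟩ : ∃ v, 1 ≤ v ∧ (t:ℕ) + v = K - 1 := ⟨K-1-(t:ℕ), by omega, by omega⟩
  have hterm : ∀ r : Fin (K-1), P s r * A r t
      = (2 / (2*((s:ℕ):ℚ)+1)) *
          ((∑ n ∈ Finset.range (2*u+1), (((2*(r:ℕ)+1).choose (2*u+1-n) : ℕ) : ℚ) * bb (2*(s:ℕ)) n)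
            * ((((2*v).choose (2*(r:ℕ)+1) : ℕ) : ℚ)
              + (((2*v).choose (2*((s:ℕ)+u)-2*(r:ℕ)) : ℕ) : ℚ))) := by
    intro r
    have hr : (r : ℕ) < K - 1 := r.isLt
    rw [hP s r, hA r t]
    have e1 : 2*K - 2*((s:ℕ)+1) = 2*u := by omega
    have e2 : 2*K - 2*((t:ℕ)+1) = 2*v := by omega
    have e3 : 2*((r:ℕ)+1) - 1 = 2*(r:ℕ)+1 := by omega
    have e4 : 2*K - 2*((r:ℕ)+1) = 2*((s:ℕ)+u)-2*(r:ℕ) := by omega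
    rw [e1, e2, e3, e4]
    have e5 : (2 * (((s:ℕ):ℚ) + 1) - 1) = 2*((s:ℕ):ℚ)+1 := by ring
    rw [e5, mul_assoc]
    congr 2
    refine Finset.sum_congr rfl fun n hn => ?_
    rw [Finset.mem_range] at hn
    rw [show 2*u - n + 1 = 2*u+1-n from by omega,
      show n + 2*((s:ℕ)+1) - 2 = n + 2*(s:ℕ) from by omega, bb]
    ring
  have hsum : ∑ r : Fin (K-1), P s r * A r t
      = ∑ ρ ∈ Finset.range ((s:ℕ)+u), (2 / (2*((s:ℕ):ℚ)+1)) *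
          ((∑ n ∈ Finset.range (2*u+1), (((2*ρ+1).choose (2*u+1-n) : ℕ) : ℚ) * bb (2*(s:ℕ)) n)
            * ((((2*v).choose (2*ρ+1) : ℕ) : ℚ)
              + (((2*v).choose (2*((s:ℕ)+u)-2*ρ) : ℕ) : ℚ))) := by
    rw [show Finset.range ((s:ℕ)+u) = Finset.range (K-1) from by rw [hu2],
      ← Fin.sum_univ_eq_sum_range (fun ρ => (2 / (2*((s:ℕ):ℚ)+1)) *
        ((∑ n ∈ Finset.range (2*u+1), (((2*ρ+1).choose (2*u+1-n) : ℕ) : ℚ) * bb (2*(s:ℕ)) n)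
          * ((((2*v).choose (2*ρ+1) : ℕ) : ℚ)
            + (((2*v).choose (2*((s:ℕ)+u)-2*ρ) : ℕ) : ℚ)))) (K-1)]
    exact Finset.sum_congr rfl fun r _ => hterm r
  rw [hsum, ← Finset.mul_sum, main_sum (s:ℕ) (t:ℕ) u v hu1 hv1 (by omega)]
  rcases eq_or_ne s t with rfl | hne
  · rw [if_pos rfl, if_pos rfl]
    have : (2*((s:ℕ):ℚ)+1) ≠ 0 := by positivity
    field_simp
  · rw [if_neg (fun h => hne (Fin.ext h)), if_neg hne, mul_zero]
end

section
/- Let K ≥ 2 and let s be a positive integer with s ≤ K-1. With C_{r,s} = C(2K-2s, 2K-2r) and P defined by P_{s,r} = -(2/(2s-1)) ∑_{n=0}^{2K-2s} C(2K-2r, 2K-2s-n+1) C(n+2s-2, n) B_n, the diagonal entry satisfies (PC)_{s,s} = 1 - (2/(2s-1)) · ∑_{n=2}^{2K-2s} C(2K-2s, n-1) · C(n+2s-2, n) · 2^{n-2} · B_n. -/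
open Finset

/-- Sum of binomial coefficients over one parity class is `2^(d-1)` when `d ≥ 1`. -/
lemma PCaux_parity_sum (d m : ℕ) (hd : 1 ≤ d) :
    ∑ i ∈ (Finset.range (d+1)).filter (fun i => Even (m + i)), d.choose i = 2^(d-1) := by
  have h1 : ∑ i ∈ range (d+1), ((-1:ℤ)^i * d.choose i) = 0 :=
    Int.alternating_sum_range_choose_of_ne (by omega)
  have h2 : ∑ i ∈ range (d+1), ((d.choose i : ℤ)) = 2^d := by
    exact_mod_cast Nat.sum_range_choose d
  rw [← Finset.sum_filter_add_sum_filter_not (range (d+1)) (fun i => Even i)] at h1 h2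
  have hE : ∑ i ∈ (range (d+1)).filter (fun i => Even i), ((-1:ℤ)^i * d.choose i)
      = ∑ i ∈ (range (d+1)).filter (fun i => Even i), (d.choose i : ℤ) := by
    refine Finset.sum_congr rfl fun i hi => ?_
    have h : Even i := (Finset.mem_filter.mp hi).2
    rw [h.neg_one_pow, one_mul]
  have hO : ∑ i ∈ (range (d+1)).filter (fun i => ¬ Even i), ((-1:ℤ)^i * d.choose i)
      = -∑ i ∈ (range (d+1)).filter (fun i => ¬ Even i), (d.choose i : ℤ) := by
    rw [← Finset.sum_neg_distrib]
    refine Finset.sum_congr rfl fun i hi => ?_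
    have h : ¬ Even i := (Finset.mem_filter.mp hi).2
    rw [(Nat.not_even_iff_odd.mp h).neg_one_pow, neg_one_mul]
  rw [hE, hO] at h1
  have hpow : (2:ℤ)^d = 2 * 2^(d-1) := by
    rw [← pow_succ']; congr 1; omega
  have key : ∀ p : ℕ → Prop, ∀ inst : DecidablePred p,
      (∀ i, p i ↔ Even (m + i)) →
      (∑ i ∈ (range (d+1)).filter p, (d.choose i : ℤ)) =
        ∑ i ∈ (range (d+1)).filter (fun i => Even (m+i)), (d.choose i : ℤ) := by
    intro p inst hp
    apply Finset.sum_congr _ (fun _ _ => rfl)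
    apply Finset.filter_congr
    intro x _; simp [hp x]
  rcases Nat.even_or_odd m with hm | hm
  · have heq : (Finset.range (d+1)).filter (fun i => Even (m + i))
        = (range (d+1)).filter (fun i => Even i) := by
      apply Finset.filter_congr; intro x _
      simp [Nat.even_add, hm]
    rw [heq]
    have : (∑ i ∈ (range (d+1)).filter (fun i => Even i), (d.choose i : ℤ)) = 2^(d-1) := by
      linarith
    exact_mod_cast this
  · have heq : (Finset.range (d+1)).filter (fun i => Even (m + i))
        = (range (d+1)).filter (fun i => ¬ Even i) := by
      apply Finset.filter_congr; intro x _
      simp [Nat.even_add, Nat.not_even_iff_odd.mpr hm]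
    rw [heq]
    have : (∑ i ∈ (range (d+1)).filter (fun i => ¬ Even i), (d.choose i : ℤ)) = 2^(d-1) := by
      linarith
    exact_mod_cast this

/-- Key evaluation of the inner sum over `r`. -/
lemma PCaux_key (K M m : ℕ) (hK : 2 ≤ K) (hM : M ≤ 2*K - 2) (hm1 : 1 ≤ m) (hmM : m ≤ M) :
    ∑ r ∈ Finset.Icc 1 (K-1), (2*K - 2*r).choose m * M.choose (2*K - 2*r)
    = M.choose m *
        ∑ i ∈ (Finset.range (M - m + 1)).filter (fun i => Even (m + i)), (M - m).choose i := by
  have step1 : ∑ r ∈ Finset.Icc 1 (K-1), (2*K - 2*r).choose m * M.choose (2*K - 2*r)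
      = ∑ j ∈ Finset.Icc 1 (K-1), (2*j).choose m * M.choose (2*j) := by
    refine Finset.sum_nbij' (fun r => K - r) (fun j => K - j) ?_ ?_ ?_ ?_ ?_
    · intro a ha; simp only [Finset.mem_Icc] at *; omega
    · intro a ha; simp only [Finset.mem_Icc] at *; omega
    · intro a ha; simp only [Finset.mem_Icc] at ha; show K - (K - a) = a; omega
    · intro a ha; simp only [Finset.mem_Icc] at ha; show K - (K - a) = a; omega
    · intro a ha; simp only [Finset.mem_Icc] at ha
      show (2*K - 2*a).choose m * M.choose (2*K - 2*a) = (2*(K-a)).choose m * M.choose (2*(K-a))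
      have : 2*K - 2*a = 2*(K-a) := by omega
      rw [this]
  have step2 : ∑ j ∈ Finset.Icc 1 (K-1), (2*j).choose m * M.choose (2*j)
      = ∑ e ∈ (Finset.Icc 2 (2*K-2)).filter (fun e => Even e), e.choose m * M.choose e := by
    refine Finset.sum_nbij' (fun j => 2*j) (fun e => e / 2) ?_ ?_ ?_ ?_ ?_
    · intro a ha; simp only [Finset.mem_Icc, Finset.mem_filter] at *
      exact ⟨by omega, ⟨a, by omega⟩⟩
    · intro a ha; simp only [Finset.mem_Icc, Finset.mem_filter] at *
      obtain ⟨⟨h1, h2⟩, t, ht⟩ := ha; omega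
    · intro a _; show 2*a/2 = a; omega
    · intro a ha; simp only [Finset.mem_Icc, Finset.mem_filter] at ha
      obtain ⟨_, t, ht⟩ := ha; show 2*(a/2) = a; omega
    · intro a _; rfl
  have step3 : ∑ e ∈ (Finset.Icc 2 (2*K-2)).filter (fun e => Even e), e.choose m * M.choose e
      = ∑ e ∈ (Finset.Icc m M).filter (fun e => Even e), e.choose m * M.choose e := by
    symm
    apply Finset.sum_subset
    · intro x hx; simp only [Finset.mem_Icc, Finset.mem_filter] at *
      obtain ⟨⟨h1, h2⟩, t, ht⟩ := hx
      exact ⟨⟨by omega, by omega⟩, ⟨t, ht⟩⟩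
    · intro x hx hnx
      simp only [Finset.mem_Icc, Finset.mem_filter] at hx hnx
      rcases lt_or_ge x m with h | h
      · rw [Nat.choose_eq_zero_of_lt h, zero_mul]
      · have : M < x := by
          rcases hx with ⟨_, he⟩
          by_contra hc; push_neg at hc
          exact hnx ⟨⟨h, hc⟩, he⟩
        rw [Nat.choose_eq_zero_of_lt this, mul_zero]
  have step4 : ∑ e ∈ (Finset.Icc m M).filter (fun e => Even e), e.choose m * M.choose e
      = ∑ i ∈ (Finset.range (M - m + 1)).filter (fun i => Even (m + i)),
          (m+i).choose m * M.choose (m+i) := by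
    refine Finset.sum_nbij' (fun e => e - m) (fun i => m + i) ?_ ?_ ?_ ?_ ?_
    · intro a ha; simp only [Finset.mem_Icc, Finset.mem_filter, Finset.mem_range] at *
      obtain ⟨⟨h1, h2⟩, he⟩ := ha
      constructor
      · omega
      · have : m + (a - m) = a := by omega
        rw [this]; exact he
    · intro a ha; simp only [Finset.mem_Icc, Finset.mem_filter, Finset.mem_range] at *
      exact ⟨⟨by omega, by omega⟩, ha.2⟩
    · intro a ha; simp only [Finset.mem_Icc, Finset.mem_filter] at ha
      show m + (a - m) = a; omega
    · intro a _; show m + a - m = a; omega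
    · intro a ha; simp only [Finset.mem_Icc, Finset.mem_filter] at ha
      show a.choose m * M.choose a = (m + (a - m)).choose m * M.choose (m + (a - m))
      have : m + (a - m) = a := by omega
      rw [this]
  have step5 : ∑ i ∈ (Finset.range (M - m + 1)).filter (fun i => Even (m + i)),
          (m+i).choose m * M.choose (m+i)
      = M.choose m *
          ∑ i ∈ (Finset.range (M - m + 1)).filter (fun i => Even (m + i)), (M - m).choose i := by
    rw [Finset.mul_sum]
    refine Finset.sum_congr rfl fun i hi => ?_
    simp only [Finset.mem_filter, Finset.mem_range] at hi
    have h1 : m + i ≤ M := by omega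
    have h2 : m ≤ m + i := Nat.le_add_right _ _
    have := Nat.choose_mul (n := M) h2
    rw [Nat.add_sub_cancel_left] at this
    rw [mul_comm, this]
  rw [step1, step2, step3, step4, step5]

theorem PC_diagonal (K s : ℕ) (hK : 2 ≤ K) (hs : 1 ≤ s) (hsK : s ≤ K - 1) :
    ∑ r ∈ Finset.Icc 1 (K - 1),
        (-(2 / (2 * (s : ℚ) - 1)) *
            ∑ n ∈ Finset.range (2 * K - 2 * s + 1),
              ((2 * K - 2 * r).choose (2 * K - 2 * s - n + 1) : ℚ) *
                ((n + 2 * s - 2).choose n : ℚ) * bernoulli n) *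
          ((2 * K - 2 * s).choose (2 * K - 2 * r) : ℚ) =
      1 - (2 / (2 * (s : ℚ) - 1)) *
          ∑ n ∈ Finset.Icc 2 (2 * K - 2 * s),
            ((2 * K - 2 * s).choose (n - 1) : ℚ) * ((n + 2 * s - 2).choose n : ℚ) *
              2 ^ (n - 2) * bernoulli n := by
  have hM2 : 2 ≤ 2*K - 2*s := by omega
  have hMK : 2*K - 2*s ≤ 2*K - 2 := by omega
  have hMe : Even (2*K - 2*s) := ⟨K - s, by omega⟩
  have hT0 : ∑ r ∈ Finset.Icc 1 (K-1),
      (2*K - 2*r).choose (2*K - 2*s - 0 + 1) * (2*K - 2*s).choose (2*K - 2*r) = 0 := by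
    apply Finset.sum_eq_zero
    intro r hr
    simp only [Finset.mem_Icc] at hr
    rcases le_or_gt (2*K - 2*r) (2*K - 2*s) with h | h
    · rw [Nat.choose_eq_zero_of_lt (by omega), zero_mul]
    · rw [Nat.choose_eq_zero_of_lt h, mul_zero]
  have hT1 : ∑ r ∈ Finset.Icc 1 (K-1),
      (2*K - 2*r).choose (2*K - 2*s - 1 + 1) * (2*K - 2*s).choose (2*K - 2*r) = 1 := by
    have h := PCaux_key K (2*K-2*s) (2*K-2*s-1+1) hK hMK (by omega) (by omega)
    rw [h]
    have e2 : 2*K-2*s-1+1 = 2*K-2*s := by omega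
    rw [e2, Nat.sub_self, Nat.choose_self, one_mul, Finset.range_one,
      Finset.filter_singleton]
    have hev : Even (2*K-2*s + 0) := by simpa using hMe
    rw [if_pos hev]
    simp
  have hT2 : ∀ n, 2 ≤ n → n ≤ 2*K - 2*s → ∑ r ∈ Finset.Icc 1 (K-1),
      (2*K - 2*r).choose (2*K - 2*s - n + 1) * (2*K - 2*s).choose (2*K - 2*r)
      = (2*K - 2*s).choose (n-1) * 2^(n-2) := by
    intro n h2 hn
    have h := PCaux_key K (2*K-2*s) (2*K-2*s-n+1) hK hMK (by omega) (by omega)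
    rw [h]
    have e1 : 2*K-2*s - (2*K-2*s-n+1) = n - 1 := by omega
    rw [e1, PCaux_parity_sum (n-1) (2*K-2*s-n+1) (by omega)]
    have e4 : 2*K-2*s-n+1 = 2*K-2*s - (n-1) := by omega
    rw [e4, Nat.choose_symm (by omega)]
    have e5 : n - 1 - 1 = n - 2 := by omega
    rw [e5]
  have L1 : (∑ r ∈ Finset.Icc 1 (K - 1),
        (-(2 / (2 * (s : ℚ) - 1)) *
            ∑ n ∈ Finset.range (2 * K - 2 * s + 1),
              ((2 * K - 2 * r).choose (2 * K - 2 * s - n + 1) : ℚ) *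
                ((n + 2 * s - 2).choose n : ℚ) * bernoulli n) *
          ((2 * K - 2 * s).choose (2 * K - 2 * r) : ℚ))
      = -(2 / (2 * (s : ℚ) - 1)) *
          ∑ r ∈ Finset.Icc 1 (K - 1),
            (∑ n ∈ Finset.range (2 * K - 2 * s + 1),
              ((2 * K - 2 * r).choose (2 * K - 2 * s - n + 1) : ℚ) *
                ((n + 2 * s - 2).choose n : ℚ) * bernoulli n) *
            ((2 * K - 2 * s).choose (2 * K - 2 * r) : ℚ) := by
    rw [Finset.mul_sum]
    exact Finset.sum_congr rfl fun r _ => mul_assoc _ _ _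
  have L2 : (∑ r ∈ Finset.Icc 1 (K - 1),
        (∑ n ∈ Finset.range (2 * K - 2 * s + 1),
            ((2 * K - 2 * r).choose (2 * K - 2 * s - n + 1) : ℚ) *
              ((n + 2 * s - 2).choose n : ℚ) * bernoulli n) *
          ((2 * K - 2 * s).choose (2 * K - 2 * r) : ℚ))
      = ∑ n ∈ Finset.range (2 * K - 2 * s + 1),
          ((n + 2 * s - 2).choose n : ℚ) * bernoulli n *
            ((∑ r ∈ Finset.Icc 1 (K-1),
              (2*K - 2*r).choose (2*K - 2*s - n + 1) * (2*K - 2*s).choose (2*K - 2*r) : ℕ) : ℚ) := by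
    rw [Finset.sum_congr rfl fun r (_ : r ∈ Finset.Icc 1 (K-1)) => Finset.sum_mul _ _ _]
    rw [Finset.sum_comm]
    refine Finset.sum_congr rfl fun n _ => ?_
    push_cast
    rw [Finset.mul_sum]
    exact Finset.sum_congr rfl fun r _ => by ring
  rw [L1, L2]
  obtain ⟨M, hM⟩ : ∃ M, 2*K - 2*s = M + 2 := ⟨2*K-2*s-2, by omega⟩
  rw [hM] at hT0 hT1 hT2 ⊢
  rw [Finset.sum_range_succ', Finset.sum_range_succ']
  have R1 : (∑ n ∈ Finset.Icc 2 (M+2), ((M + 2).choose (n - 1) : ℚ) *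
        ((n + 2 * s - 2).choose n : ℚ) * 2 ^ (n - 2) * bernoulli n)
      = ∑ i ∈ Finset.range (M+1), ((M + 2).choose (2 + i - 1) : ℚ) *
        ((2 + i + 2 * s - 2).choose (2 + i) : ℚ) * 2 ^ (2 + i - 2) * bernoulli (2 + i) := by
    rw [← Finset.Ico_add_one_right_eq_Icc, Finset.sum_Ico_eq_sum_range]
    rfl
  rw [R1]
  simp only [zero_add]
  have hsum : (∑ k ∈ Finset.range (M+1),
        ((k + 1 + 1 + 2 * s - 2).choose (k + 1 + 1) : ℚ) * bernoulli (k + 1 + 1) *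
          ↑(∑ r ∈ Finset.Icc 1 (K-1),
            (2 * K - 2 * r).choose (M + 2 - (k + 1 + 1) + 1) * (M + 2).choose (2 * K - 2 * r)))
      = ∑ i ∈ Finset.range (M+1), ((M + 2).choose (2 + i - 1) : ℚ) *
        ((2 + i + 2 * s - 2).choose (2 + i) : ℚ) * 2 ^ (2 + i - 2) * bernoulli (2 + i) := by
    refine Finset.sum_congr rfl fun k hk => ?_
    simp only [Finset.mem_range] at hk
    rw [hT2 (k+1+1) (by omega) (by omega)]
    rw [show 2 + k = k + 1 + 1 from by omega]
    push_cast
    ring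
  rw [hsum]
  rw [hT1, hT0]
  have e1 : (1:ℕ) + 2*s - 2 = 2*s - 1 := by omega
  rw [e1, Nat.choose_one_right, bernoulli_one, bernoulli_zero]
  have hcast : ((2*s - 1 : ℕ) : ℚ) = 2*(s:ℚ) - 1 := by
    push_cast [Nat.cast_sub (by omega : 1 ≤ 2*s)]
    ring
  rw [hcast]
  have hc : (2*(s:ℚ) - 1) ≠ 0 := by
    have h1 : (1:ℚ) ≤ (s:ℚ) := by exact_mod_cast hs
    intro h; linarith
  field_simp
  ring
end

section
/- Let K ≥ 2 and 1 ≤ s < s' ≤ K-1. Define B_{r,s'} = C(2K-2s', 2r-1), C_{r,s'} = C(2K-2s', 2K-2r), and P_{s,r} as either of the two equal expressions (2/(2s-1)) ∑_{n=0}^{2K-2s} C(2r-1, 2K-2s-n+1) C(n+2s-2,n) B_n = -(2/(2s-1)) ∑_{n=0}^{2K-2s} C(2K-2r, 2K-2s-n+1) C(n+2s-2,n) B_n. Then ∑_{r=1}^{K-1} P_{s,r} (B_{r,s'} + C_{r,s'}) = 0. -/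
open Finset

private lemma alt_qq (m : ℕ) :
    ∑ i ∈ Finset.range (m + 1), (-1 : ℚ) ^ i * (m.choose i : ℚ) =
      if m = 0 then 1 else 0 := by
  have h := Int.alternating_sum_range_choose (n := m)
  have h2 := congrArg (fun z : ℤ => (z : ℚ)) h
  push_cast at h2
  simpa using h2

private lemma key_sum (M k J : ℕ) (hk : 1 ≤ k) (hMJ : M ≤ J) :
    ∑ j ∈ Finset.range (J + 1), (-1 : ℚ) ^ j * (M.choose j : ℚ) * (j.choose k : ℚ)
      = (-1 : ℚ) ^ M * (if k = M then 1 else 0) := by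
  rcases le_or_gt k M with hkM | hkM
  · have hsub : Finset.Ico k (J + 1) ⊆ Finset.range (J + 1) := by
      intro j hj
      simp only [Finset.mem_Ico] at hj
      simp only [Finset.mem_range]
      omega
    have h1 : ∑ j ∈ Finset.range (J + 1), (-1 : ℚ) ^ j * (M.choose j : ℚ) * (j.choose k : ℚ)
        = ∑ j ∈ Finset.Ico k (J + 1), (-1 : ℚ) ^ j * (M.choose j : ℚ) * (j.choose k : ℚ) := by
      refine (Finset.sum_subset hsub ?_).symm
      intro j hj hj'
      simp only [Finset.mem_range] at hj
      simp only [Finset.mem_Ico, not_and, not_lt] at hj'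
      have hjk : j < k := by omega
      rw [Nat.choose_eq_zero_of_lt hjk]
      simp
    rw [h1, Finset.sum_Ico_eq_sum_range]
    have h2 : ∀ i, (M.choose (k + i) : ℚ) * ((k + i).choose k : ℚ)
        = (M.choose k : ℚ) * ((M - k).choose i : ℚ) := by
      intro i
      rcases le_or_gt (k + i) M with h | h
      · have := Nat.choose_mul (n := M) (k := k + i) (s := k) (Nat.le_add_right _ _)
        have h3 : k + i - k = i := by omega
        rw [h3] at this
        exact_mod_cast congrArg (fun x : ℕ => (x : ℚ)) this
      · rw [Nat.choose_eq_zero_of_lt h, Nat.choose_eq_zero_of_lt (by omega : M - k < i)]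
        simp
    have h4 : ∑ i ∈ Finset.range (J + 1 - k),
        (-1 : ℚ) ^ (k + i) * (M.choose (k + i) : ℚ) * ((k + i).choose k : ℚ)
        = (-1 : ℚ) ^ k * (M.choose k : ℚ) *
          ∑ i ∈ Finset.range (J + 1 - k), (-1 : ℚ) ^ i * ((M - k).choose i : ℚ) := by
      rw [Finset.mul_sum]
      refine Finset.sum_congr rfl fun i _ => ?_
      rw [pow_add]
      linear_combination ((-1 : ℚ) ^ k * (-1) ^ i) * h2 i
    rw [h4]
    have hsub2 : Finset.range (M - k + 1) ⊆ Finset.range (J + 1 - k) := by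
      apply Finset.range_subset_range.mpr; omega
    have h5 : ∑ i ∈ Finset.range (J + 1 - k), (-1 : ℚ) ^ i * ((M - k).choose i : ℚ)
        = ∑ i ∈ Finset.range (M - k + 1), (-1 : ℚ) ^ i * ((M - k).choose i : ℚ) := by
      refine (Finset.sum_subset hsub2 ?_).symm
      intro i hi hi'
      simp only [Finset.mem_range] at hi hi'
      rw [Nat.choose_eq_zero_of_lt (by omega)]
      simp
    rw [h5, alt_qq]
    rcases eq_or_lt_of_le hkM with heq | hlt
    · subst heq
      simp
    · rw [if_neg (by omega), if_neg (by omega)]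
      simp
  · rw [if_neg (by omega), mul_zero]
    refine Finset.sum_eq_zero fun j hj => ?_
    rcases le_or_gt j M with h | h
    · rw [Nat.choose_eq_zero_of_lt (by omega : j < k)]; simp
    · rw [Nat.choose_eq_zero_of_lt h]; simp

private lemma pair_sum (g : ℕ → ℚ) (m : ℕ) :
    ∑ r ∈ Finset.range m, (g (2 * r + 1) - g (2 * r + 2))
      = ∑ j ∈ Finset.range (2 * m), (-1 : ℚ) ^ j * g (j + 1) := by
  induction m with
  | zero => simp
  | succ m ih =>
    rw [Finset.sum_range_succ, ih]
    have h0 : 2 * (m + 1) = 2 * m + 1 + 1 := by ring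
    rw [h0, Finset.sum_range_succ, Finset.sum_range_succ]
    have h1 : (-1 : ℚ) ^ (2 * m) = 1 := by
      rw [pow_mul]; norm_num
    have h2 : (-1 : ℚ) ^ (2 * m + 1) = -1 := by
      rw [pow_succ, h1]; norm_num
    rw [h1, h2]
    have e1 : 2 * m + 1 + 1 = 2 * m + 2 := rfl
    rw [e1]
    ring

private lemma icc_to_range (K : ℕ) (f : ℕ → ℚ) :
    ∑ r ∈ Finset.Icc 1 (K - 1), f r = ∑ i ∈ Finset.range (K - 1), f (i + 1) := by
  rw [← Finset.Ico_add_one_right_eq_Icc, Finset.sum_Ico_eq_sum_range]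
  simp only [Nat.add_sub_cancel]
  exact Finset.sum_congr rfl fun i _ => by rw [add_comm]

theorem off_diagonal_lt (K s s' : ℕ) (hK : 2 ≤ K) (hs : 1 ≤ s) (hss' : s < s')
    (hs' : s' ≤ K - 1) (P : ℕ → ℚ)
    (hP1 : ∀ r ∈ Finset.Icc 1 (K - 1),
      P r = (2 / (2 * (s : ℚ) - 1)) *
        ∑ n ∈ Finset.range (2 * K - 2 * s + 1),
          ((2 * r - 1).choose (2 * K - 2 * s - n + 1) : ℚ) *
            ((n + 2 * s - 2).choose n : ℚ) * bernoulli n)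
    (hP2 : ∀ r ∈ Finset.Icc 1 (K - 1),
      P r = -(2 / (2 * (s : ℚ) - 1)) *
        ∑ n ∈ Finset.range (2 * K - 2 * s + 1),
          ((2 * K - 2 * r).choose (2 * K - 2 * s - n + 1) : ℚ) *
            ((n + 2 * s - 2).choose n : ℚ) * bernoulli n) :
    ∑ r ∈ Finset.Icc 1 (K - 1),
        P r * (((2 * K - 2 * s').choose (2 * r - 1) : ℚ) +
          ((2 * K - 2 * s').choose (2 * K - 2 * r) : ℚ)) = 0 := by
  have hs'2 : 2 ≤ s' := by omega
  set N : ℕ := 2 * K - 2 * s with hN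
  set M : ℕ := 2 * K - 2 * s' with hM
  set S : ℕ → ℚ := fun j => ∑ n ∈ Finset.range (N + 1),
      (j.choose (N - n + 1) : ℚ) * ((n + 2 * s - 2).choose n : ℚ) * bernoulli n with hS
  have hP1' : ∀ r ∈ Finset.Icc 1 (K - 1),
      P r = (2 / (2 * (s : ℚ) - 1)) * S (2 * r - 1) := by
    intro r hr; rw [hP1 r hr]
  have hP2' : ∀ r ∈ Finset.Icc 1 (K - 1),
      P r = -(2 / (2 * (s : ℚ) - 1)) * S (2 * K - 2 * r) := by
    intro r hr; rw [hP2 r hr]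
  have hstep : ∀ r ∈ Finset.Icc 1 (K - 1),
      P r * ((M.choose (2 * r - 1) : ℚ) + (M.choose (2 * K - 2 * r) : ℚ))
        = (2 / (2 * (s : ℚ) - 1)) *
          (S (2 * r - 1) * (M.choose (2 * r - 1) : ℚ)
            - S (2 * K - 2 * r) * (M.choose (2 * K - 2 * r) : ℚ)) := by
    intro r hr
    rw [mul_add]
    nth_rewrite 1 [hP1' r hr]
    rw [hP2' r hr]
    ring
  rw [Finset.sum_congr rfl hstep, ← Finset.mul_sum]
  suffices h : ∑ r ∈ Finset.Icc 1 (K - 1),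
      (S (2 * r - 1) * (M.choose (2 * r - 1) : ℚ)
        - S (2 * K - 2 * r) * (M.choose (2 * K - 2 * r) : ℚ)) = 0 by
    rw [h, mul_zero]
  set g : ℕ → ℚ := fun j => S j * (M.choose j : ℚ) with hg
  have hgoal1 : ∑ r ∈ Finset.Icc 1 (K - 1),
      (S (2 * r - 1) * (M.choose (2 * r - 1) : ℚ)
        - S (2 * K - 2 * r) * (M.choose (2 * K - 2 * r) : ℚ))
      = ∑ r ∈ Finset.Icc 1 (K - 1), (g (2 * r - 1) - g (2 * K - 2 * r)) := by
    simp only [hg]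
  rw [hgoal1, icc_to_range]
  have hre : ∀ i ∈ Finset.range (K - 1),
      g (2 * (i + 1) - 1) - g (2 * K - 2 * (i + 1))
        = g (2 * i + 1) - g (2 * K - 2 * i - 2) := by
    intro i hi
    have e1 : 2 * (i + 1) - 1 = 2 * i + 1 := by omega
    have e2 : 2 * K - 2 * (i + 1) = 2 * K - 2 * i - 2 := by omega
    rw [e1, e2]
  rw [Finset.sum_congr rfl hre, Finset.sum_sub_distrib]
  have hrefl : ∑ i ∈ Finset.range (K - 1), g (2 * K - 2 * i - 2)
      = ∑ i ∈ Finset.range (K - 1), g (2 * i + 2) := by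
    have hr2 := Finset.sum_range_reflect (fun i => g (2 * i + 2)) (K - 1)
    rw [← hr2]
    refine Finset.sum_congr rfl fun i hi => ?_
    simp only [Finset.mem_range] at hi
    congr 1
    omega
  rw [hrefl, ← Finset.sum_sub_distrib, pair_sum]
  have hext : ∑ j ∈ Finset.range (2 * (K - 1)), (-1 : ℚ) ^ j * g (j + 1)
      = ∑ j ∈ Finset.range (2 * K - 1), (-1 : ℚ) ^ j * g (j + 1) := by
    refine Finset.sum_subset (Finset.range_subset_range.mpr (by omega)) ?_
    intro j hj hj'
    simp only [Finset.mem_range] at hj hj'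
    have hcz : M.choose (j + 1) = 0 := Nat.choose_eq_zero_of_lt (by omega)
    simp only [hg, hcz]
    simp
  rw [hext]
  have h6 : ∀ j, (-1 : ℚ) ^ j * g (j + 1)
      = ∑ n ∈ Finset.range (N + 1),
          ((-1 : ℚ) ^ j * (M.choose (j + 1) : ℚ) * (((j + 1).choose (N - n + 1)) : ℚ)) *
            (((n + 2 * s - 2).choose n : ℚ) * bernoulli n) := by
    intro j
    simp only [hg, hS]
    rw [Finset.sum_mul, Finset.mul_sum]
    refine Finset.sum_congr rfl fun n _ => ?_
    ring
  have hswap : ∑ j ∈ Finset.range (2 * K - 1), (-1 : ℚ) ^ j * g (j + 1)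
      = ∑ n ∈ Finset.range (N + 1),
          (((n + 2 * s - 2).choose n : ℚ) * bernoulli n) *
            ∑ j ∈ Finset.range (2 * K - 1),
              (-1 : ℚ) ^ j * (M.choose (j + 1) : ℚ) * (((j + 1).choose (N - n + 1)) : ℚ) := by
    simp_rw [h6]
    rw [Finset.sum_comm]
    refine Finset.sum_congr rfl fun n _ => ?_
    rw [← Finset.sum_mul, mul_comm]
  rw [hswap]
  refine Finset.sum_eq_zero fun n hn => ?_
  simp only [Finset.mem_range] at hn
  have hk1 : 1 ≤ N - n + 1 := by omega
  have hinner : ∑ j ∈ Finset.range (2 * K - 1),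
      (-1 : ℚ) ^ j * (M.choose (j + 1) : ℚ) * (((j + 1).choose (N - n + 1)) : ℚ)
      = -((-1 : ℚ) ^ M * (if N - n + 1 = M then 1 else 0)) := by
    have hkey := key_sum M (N - n + 1) (2 * K - 1) hk1 (by omega)
    rw [Finset.sum_range_succ'] at hkey
    have hz : (Nat.choose 0 (N - n + 1) : ℚ) = 0 := by
      rw [Nat.choose_eq_zero_of_lt (by omega)]
      simp
    rw [hz] at hkey
    simp only [mul_zero, add_zero] at hkey
    have hneg : ∑ i ∈ Finset.range (2 * K - 1),
        (-1 : ℚ) ^ (i + 1) * (M.choose (i + 1) : ℚ) * (((i + 1).choose (N - n + 1)) : ℚ)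
        = -∑ i ∈ Finset.range (2 * K - 1),
            (-1 : ℚ) ^ i * (M.choose (i + 1) : ℚ) * (((i + 1).choose (N - n + 1)) : ℚ) := by
      rw [← Finset.sum_neg_distrib]
      refine Finset.sum_congr rfl fun i _ => ?_
      ring
    rw [hneg] at hkey
    linarith
  rw [hinner]
  by_cases hcase : N - n + 1 = M
  · have hn0 : n = 2 * (s' - s) + 1 := by omega
    have hodd : Odd n := ⟨s' - s, by omega⟩
    have hb : bernoulli n = 0 := by
      rw [bernoulli_eq_bernoulli'_of_ne_one (by omega),
        bernoulli'_eq_zero_of_odd hodd (by omega)]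
    rw [hb]
    ring
  · simp only [if_neg hcase]
    ring
end

section
/- Let f(t) = t/(e^t - 1) and let m be a nonnegative integer. Then e^t · f^(m)(t) = (-1)^m t + (-1)^{m-1} m + ∑_{k=0}^m (-1)^{m-k} C(m,k) f^(k)(t), as an identity for all t with e^t ≠ 1 (equivalently as formal power series after removing the singularity at 0). -/
open scoped ContDiff

noncomputable def ff : ℝ → ℝ := fun x => x / (Real.exp x - 1)

lemma ff_def : ff = fun x : ℝ => x / (Real.exp x - 1) := rfl

lemma ff_smooth : ContDiffOn ℝ ∞ ff {x : ℝ | x ≠ 0} := by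
  apply ContDiffOn.div contDiffOn_id
    ((Real.contDiff_exp.sub contDiff_const).contDiffOn)
  intro x hx
  simp only [Set.mem_setOf_eq] at hx
  exact sub_ne_zero.2 (fun h => hx (Real.exp_injective (h.trans Real.exp_zero.symm)))

lemma smooth_iter (k : ℕ) : ContDiffOn ℝ ∞ (iteratedDeriv k ff) {x : ℝ | x ≠ 0} := by
  induction k with
  | zero => simpa [iteratedDeriv_zero] using ff_smooth
  | succ n ih =>
    rw [iteratedDeriv_succ]
    exact ih.deriv_of_isOpen isOpen_ne (by simp)

lemma diffat (k : ℕ) (t : ℝ) (ht : t ≠ 0) : DifferentiableAt ℝ (iteratedDeriv k ff) t :=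
  ((smooth_iter k).differentiableOn (by simp)).differentiableAt (isOpen_ne.mem_nhds ht)

lemma hsign (m k : ℕ) (h : k ≤ m) : (-1 : ℝ) ^ (m - k) = (-1) ^ m * (-1) ^ k := by
  conv_rhs => rw [← Nat.sub_add_cancel h, pow_add]
  rw [mul_assoc, ← pow_add, ← two_mul, pow_mul]
  norm_num

lemma constL (m : ℕ) : (-1 : ℝ) ^ m - (-1 : ℝ) ^ (m - 1) * m = (-1 : ℝ) ^ m * (m + 1) := by
  cases m with
  | zero => norm_num
  | succ n =>
    simp only [Nat.succ_sub_one, pow_succ]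
    push_cast
    ring

lemma sumL (m : ℕ) (b : ℕ → ℝ) :
    (∑ k ∈ Finset.range (m + 1), (-1 : ℝ) ^ (m - k) * (m.choose k : ℝ) * b (k + 1)) -
      ∑ k ∈ Finset.range (m + 1), (-1 : ℝ) ^ (m - k) * (m.choose k : ℝ) * b k =
    ∑ j ∈ Finset.range (m + 2), (-1 : ℝ) ^ (m + 1 - j) * ((m + 1).choose j : ℝ) * b j := by
  set c : ℕ → ℝ := fun k => (-1 : ℝ) ^ k * (m.choose k : ℝ) with hc
  set d : ℕ → ℝ := fun j => (-1 : ℝ) ^ j * ((m + 1).choose j : ℝ) with hd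
  have h1 : ∑ k ∈ Finset.range (m + 1), (-1 : ℝ) ^ (m - k) * (m.choose k : ℝ) * b (k + 1)
      = (-1 : ℝ) ^ m * ∑ k ∈ Finset.range (m + 1), c k * b (k + 1) := by
    rw [Finset.mul_sum]
    refine Finset.sum_congr rfl fun k hk => ?_
    rw [hsign m k (Nat.lt_succ_iff.mp (Finset.mem_range.mp hk))]
    simp only [hc]; ring
  have h2 : ∑ k ∈ Finset.range (m + 1), (-1 : ℝ) ^ (m - k) * (m.choose k : ℝ) * b k
      = (-1 : ℝ) ^ m * ∑ k ∈ Finset.range (m + 1), c k * b k := by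
    rw [Finset.mul_sum]
    refine Finset.sum_congr rfl fun k hk => ?_
    rw [hsign m k (Nat.lt_succ_iff.mp (Finset.mem_range.mp hk))]
    simp only [hc]; ring
  have h3 : ∑ j ∈ Finset.range (m + 2), (-1 : ℝ) ^ (m + 1 - j) * ((m + 1).choose j : ℝ) * b j
      = (-1 : ℝ) ^ (m + 1) * ∑ j ∈ Finset.range (m + 2), d j * b j := by
    rw [Finset.mul_sum]
    refine Finset.sum_congr rfl fun j hj => ?_
    rw [hsign (m + 1) j (Nat.lt_succ_iff.mp (Finset.mem_range.mp hj))]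
    simp only [hd]; ring
  have core : ∑ j ∈ Finset.range (m + 2), d j * b j
      = (∑ k ∈ Finset.range (m + 1), c k * b k)
        - ∑ k ∈ Finset.range (m + 1), c k * b (k + 1) := by
    have hdsucc : ∀ j, d (j + 1) = c (j + 1) - c j := by
      intro j
      simp only [hd, hc, Nat.choose_succ_succ, Nat.cast_add, pow_succ]
      ring
    rw [Finset.sum_range_succ' _ (m + 1)]
    simp only [hdsucc, sub_mul, Finset.sum_sub_distrib]
    have e1 : ∑ j ∈ Finset.range (m + 1), c (j + 1) * b (j + 1)
        = ∑ j ∈ Finset.range m, c (j + 1) * b (j + 1) := by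
      rw [Finset.sum_range_succ]
      simp [hc, Nat.choose_succ_self]
    have e2 : ∑ k ∈ Finset.range (m + 1), c k * b k
        = (∑ j ∈ Finset.range m, c (j + 1) * b (j + 1)) + c 0 * b 0 := by
      rw [Finset.sum_range_succ']
    have hd0 : d 0 = 1 := by simp [hd]
    have hc0 : c 0 = 1 := by simp [hc]
    rw [e1, e2, hd0, hc0]
    ring
  rw [h1, h2, h3, core, pow_succ]
  ring

lemma main_rel (m : ℕ) : ∀ t : ℝ, t ≠ 0 →
    Real.exp t * iteratedDeriv m ff t =
      (-1 : ℝ) ^ m * t + (-1 : ℝ) ^ (m - 1) * m +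
        ∑ k ∈ Finset.range (m + 1),
          (-1 : ℝ) ^ (m - k) * (m.choose k : ℝ) * iteratedDeriv k ff t := by
  induction m with
  | zero =>
    intro t ht
    have h1 : Real.exp t - 1 ≠ 0 := sub_ne_zero.2 (fun h => ht (Real.exp_injective (h.trans Real.exp_zero.symm)))
    have h0 : ff t = t / (Real.exp t - 1) := rfl
    simp only [Finset.sum_range_succ, Finset.sum_range_zero, iteratedDeriv_zero, pow_zero,
      one_mul, Nat.cast_zero, mul_zero, Nat.choose_self, Nat.cast_one, Nat.sub_self,
      add_zero, zero_add, h0]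
    field_simp
    ring
  | succ m ih =>
    intro t ht
    have hev : (fun x => Real.exp x * iteratedDeriv m ff x) =ᶠ[nhds t]
        (fun x => (-1 : ℝ) ^ m * x + (-1 : ℝ) ^ (m - 1) * m +
          ∑ k ∈ Finset.range (m + 1),
            (-1 : ℝ) ^ (m - k) * (m.choose k : ℝ) * iteratedDeriv k ff x) := by
      filter_upwards [isOpen_ne.mem_nhds ht] with x hx
      exact ih x hx
    have hderiv_eq := hev.deriv_eq
    have hL : deriv (fun x => Real.exp x * iteratedDeriv m ff x) t
        = Real.exp t * iteratedDeriv m ff t + Real.exp t * iteratedDeriv (m + 1) ff t := by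
      rw [deriv_fun_mul Real.differentiableAt_exp (diffat m t ht), Real.deriv_exp,
        ← iteratedDeriv_succ]
    have hR : HasDerivAt (fun x => (-1 : ℝ) ^ m * x + (-1 : ℝ) ^ (m - 1) * m +
          ∑ k ∈ Finset.range (m + 1),
            (-1 : ℝ) ^ (m - k) * (m.choose k : ℝ) * iteratedDeriv k ff x)
        ((-1 : ℝ) ^ m + ∑ k ∈ Finset.range (m + 1),
          (-1 : ℝ) ^ (m - k) * (m.choose k : ℝ) * iteratedDeriv (k + 1) ff t) t := by
      have h1 : HasDerivAt (fun x : ℝ => (-1 : ℝ) ^ m * x + (-1 : ℝ) ^ (m - 1) * m)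
          ((-1 : ℝ) ^ m) t := by
        simpa using ((hasDerivAt_id t).const_mul ((-1 : ℝ) ^ m)).add_const
          ((-1 : ℝ) ^ (m - 1) * m)
      have h2 : HasDerivAt (fun x => ∑ k ∈ Finset.range (m + 1),
            (-1 : ℝ) ^ (m - k) * (m.choose k : ℝ) * iteratedDeriv k ff x)
          (∑ k ∈ Finset.range (m + 1),
            (-1 : ℝ) ^ (m - k) * (m.choose k : ℝ) * iteratedDeriv (k + 1) ff t) t := by
        apply HasDerivAt.fun_sum
        intro k _
        have hk := (diffat k t ht).hasDerivAt
        rw [show deriv (iteratedDeriv k ff) t = iteratedDeriv (k + 1) ff t by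
          rw [iteratedDeriv_succ]] at hk
        exact hk.const_mul _
      exact h1.add h2
    have heq : Real.exp t * iteratedDeriv (m + 1) ff t
        = ((-1 : ℝ) ^ m + ∑ k ∈ Finset.range (m + 1),
            (-1 : ℝ) ^ (m - k) * (m.choose k : ℝ) * iteratedDeriv (k + 1) ff t)
          - Real.exp t * iteratedDeriv m ff t := by
      rw [hL, hR.deriv] at hderiv_eq
      linarith
    rw [heq, ih t ht]
    have hs := sumL m (fun k => iteratedDeriv k ff t)
    have hcst := constL m
    simp only [Nat.add_sub_cancel, show m + 1 + 1 = m + 2 from rfl]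
    push_cast
    linear_combination hs + hcst

theorem deriv_relation_f (m : ℕ) (t : ℝ) (ht : Real.exp t ≠ 1) :
    Real.exp t * iteratedDeriv m (fun x : ℝ => x / (Real.exp x - 1)) t =
      (-1 : ℝ) ^ m * t + (-1 : ℝ) ^ (m - 1) * m +
        ∑ k ∈ Finset.range (m + 1),
          (-1 : ℝ) ^ (m - k) * (m.choose k : ℝ) *
            iteratedDeriv k (fun x : ℝ => x / (Real.exp x - 1)) t := by
  rw [← ff_def]
  exact main_rel m t (fun h => ht (by rw [h, Real.exp_zero]))
end

section
/- For nonnegative integers m < n with n ≥ 1: ∑_{k=m}^{m+n} (n!/((k-m)!(m+n-k)!)) · B_k = (-1)^m δ_{n,1} + ∑_{k=0}^m (-1)^{m-k} C(m,k) · B_{n+k}, where δ_{n,1} = 1 if n = 1 and 0 otherwise. -/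
open Finset

private def Sb (m n : ℕ) : ℚ := ∑ j ∈ range (n+1), (n.choose j : ℚ) * bernoulli (m+j)

private def Ub (m n : ℕ) : ℚ := ∑ k ∈ range (m+1), (-1:ℚ)^k * (m.choose k : ℚ) * bernoulli (n+k)

private lemma pascal_sum (f : ℕ → ℚ) (n : ℕ) :
    ∑ j ∈ range (n+2), ((n+1).choose j : ℚ) * f j
      = ∑ j ∈ range (n+1), (n.choose j : ℚ) * f j
        + ∑ j ∈ range (n+1), (n.choose j : ℚ) * f (j+1) := by
  rw [Finset.sum_range_succ' (fun j => ((n+1).choose j : ℚ) * f j) (n+1),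
      Finset.sum_range_succ' (fun j => (n.choose j : ℚ) * f j) n]
  have h1 : ∀ j ∈ range (n+1),
      (((n+1).choose (j+1) : ℚ)) * f (j+1)
        = (n.choose j : ℚ) * f (j+1) + (n.choose (j+1) : ℚ) * f (j+1) := by
    intro j _
    rw [Nat.choose_succ_succ]
    push_cast
    ring
  rw [Finset.sum_congr rfl h1, Finset.sum_add_distrib,
      Finset.sum_range_succ (fun j => (n.choose (j+1) : ℚ) * f (j+1)) n]
  simp [Nat.choose_succ_self]
  ring

private lemma Sb_rec (m n : ℕ) : Sb m (n+1) = Sb m n + Sb (m+1) n := by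
  have h := pascal_sum (fun j => bernoulli (m+j)) n
  have h2 : ∑ j ∈ range (n+1), (n.choose j : ℚ) * bernoulli (m+(j+1)) = Sb (m+1) n := by
    unfold Sb
    refine Finset.sum_congr rfl fun j _ => ?_
    rw [show m+(j+1) = m+1+j from by omega]
  unfold Sb
  rw [show ∑ j ∈ range (n+1), (n.choose j : ℚ) * bernoulli (m+1+j) = Sb (m+1) n from rfl, ← h2]
  exact h

private lemma Ub_rec (m n : ℕ) : Ub (m+1) n = Ub m n - Ub m (n+1) := by
  have h := pascal_sum (fun k => (-1:ℚ)^k * bernoulli (n+k)) m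
  have e1 : Ub (m+1) n = ∑ k ∈ range (m+2), ((m+1).choose k : ℚ) * ((-1:ℚ)^k * bernoulli (n+k)) := by
    unfold Ub; refine Finset.sum_congr rfl fun k _ => ?_; ring
  have e2 : Ub m n = ∑ k ∈ range (m+1), (m.choose k : ℚ) * ((-1:ℚ)^k * bernoulli (n+k)) := by
    unfold Ub; refine Finset.sum_congr rfl fun k _ => ?_; ring
  have e3 : Ub m (n+1) = -∑ k ∈ range (m+1), (m.choose k : ℚ) * ((-1:ℚ)^(k+1) * bernoulli (n+(k+1))) := by
    unfold Ub
    rw [← Finset.sum_neg_distrib]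
    refine Finset.sum_congr rfl fun k _ => ?_
    rw [show n+1+k = n+(k+1) from by omega]
    ring
  rw [e1, e2, e3, h]
  ring

private lemma key (m : ℕ) : ∀ n, 1 ≤ n →
    Sb m n = (-1:ℚ)^m * ((if n = 1 then (1:ℚ) else 0) + Ub m n) := by
  induction m with
  | zero =>
    intro n hn
    unfold Sb Ub
    rw [Finset.sum_range_succ]
    simp [sum_bernoulli]
  | succ m ih =>
    intro n hn
    have h1 := ih n hn
    have h2 := ih (n+1) (by omega)
    have hS := Sb_rec m n
    have hU := Ub_rec m n
    have hn1 : ¬ (n + 1 = 1) := by omega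
    rw [if_neg hn1] at h2
    rw [show Sb (m+1) n = Sb m (n+1) - Sb m n from by linarith [hS], h1, h2, hU]
    by_cases h : n = 1 <;> simp [h] <;> ring

theorem coeff_comparison (m n : ℕ) (hmn : m < n) (hn : 1 ≤ n) :
    ∑ k ∈ Finset.Icc m (m + n),
        ((n.factorial : ℚ) / (((k - m).factorial : ℚ) * ((m + n - k).factorial : ℚ))) *
          bernoulli k =
      (-1 : ℚ) ^ m * (if n = 1 then 1 else 0) +
        ∑ k ∈ Finset.range (m + 1),
          (-1 : ℚ) ^ (m - k) * (m.choose k : ℚ) * bernoulli (n + k) := by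
  have hL : ∑ k ∈ Finset.Icc m (m + n),
      ((n.factorial : ℚ) / (((k - m).factorial : ℚ) * ((m + n - k).factorial : ℚ))) *
        bernoulli k = Sb m n := by
    rw [← Finset.Ico_add_one_right_eq_Icc, Finset.sum_Ico_eq_sum_range,
      show m + n + 1 - m = n + 1 from by omega]
    unfold Sb
    refine Finset.sum_congr rfl fun j hj => ?_
    rw [Finset.mem_range] at hj
    have hjn : j ≤ n := by omega
    rw [show m + j - m = j from by omega, show m + n - (m + j) = n - j from by omega]
    have hfac : (n.choose j : ℚ) * ((j.factorial : ℚ) * ((n-j).factorial : ℚ)) = (n.factorial : ℚ) := by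
      have := Nat.choose_mul_factorial_mul_factorial hjn
      push_cast [← this]
      ring
    have hpos : ((j.factorial : ℚ) * ((n-j).factorial : ℚ)) ≠ 0 := by positivity
    congr 1
    rw [div_eq_iff hpos]
    linarith [hfac]
  have hR : ∑ k ∈ Finset.range (m + 1),
      (-1 : ℚ) ^ (m - k) * (m.choose k : ℚ) * bernoulli (n + k) = (-1:ℚ)^m * Ub m n := by
    unfold Ub
    rw [Finset.mul_sum]
    refine Finset.sum_congr rfl fun k hk => ?_
    rw [Finset.mem_range] at hk
    have hkm : k ≤ m := by omega
    have hsgn : (-1:ℚ)^(m-k) = (-1:ℚ)^m * (-1:ℚ)^k := by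
      have hm : (-1:ℚ)^m = (-1:ℚ)^(m-k) * (-1:ℚ)^k := by
        rw [← pow_add, Nat.sub_add_cancel hkm]
      rw [hm, mul_assoc, ← pow_add, ← two_mul, pow_mul]
      norm_num
    rw [hsgn]; ring
  rw [hL, hR, key m n hn]
  ring
end

section
/- Let K ≥ 2 and let 1 ≤ s, s' ≤ K-1 with s > s'. With B_{r,s'} = C(2K-2s', 2r-1) and P_{s,r} = (2/(2s-1)) ∑_{n=0}^{2K-2s} C(2r-1, 2K-2s-n+1) C(n+2s-2, n) B_n, one has (PB)_{s,s'} = (2/(2s-1)) ∑_{n=0}^{2K-2s} C(2K-2s', 2s-2s'+n-1) · C(n+2s-2, n) · 2^{2s-2s'+n-2} · B_n. -/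
open Finset

lemma half_sum_choose (u t : ℕ) (hu : 1 ≤ u) :
    ∑ k ∈ range (u + 1), (if Odd (k + t) then (u.choose k : ℚ) else 0) = 2 ^ (u - 1) := by
  have h2 : ∑ k ∈ range (u + 1), (u.choose k : ℚ) = 2 ^ u := by
    exact_mod_cast congrArg (Nat.cast : ℕ → ℚ) (Nat.sum_range_choose u)
  have h1 : ∑ k ∈ range (u + 1), ((-1 : ℚ) ^ k * u.choose k) = 0 := by
    have := Int.alternating_sum_range_choose (n := u)
    rw [if_neg (by omega : u ≠ 0)] at this
    exact_mod_cast congrArg (Int.cast : ℤ → ℚ) this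
  have hterm : ∀ k, (if Odd (k + t) then (u.choose k : ℚ) else 0) * 2
      = (u.choose k : ℚ) + (-1) ^ (t + 1) * ((-1 : ℚ) ^ k * u.choose k) := by
    intro k
    rcases Nat.even_or_odd (k + t) with h | h
    · rw [if_neg (Nat.not_odd_iff_even.mpr h)]
      have h3 : (-1 : ℚ) ^ (t + 1) * (-1 : ℚ) ^ k = -1 := by
        rw [← pow_add]
        have : Odd (t + 1 + k) := by
          rcases h with ⟨c, hc⟩; exact ⟨c, by omega⟩
        exact this.neg_one_pow
      rw [← mul_assoc, h3]; ring
    · rw [if_pos h]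
      have h3 : (-1 : ℚ) ^ (t + 1) * (-1 : ℚ) ^ k = 1 := by
        rw [← pow_add]
        have : Even (t + 1 + k) := by
          rcases h with ⟨c, hc⟩; exact ⟨c + 1, by omega⟩
        exact this.neg_one_pow
      rw [← mul_assoc, h3]; ring
  have hsum : (∑ k ∈ range (u + 1), (if Odd (k + t) then (u.choose k : ℚ) else 0)) * 2
      = 2 ^ u := by
    rw [Finset.sum_mul]
    rw [Finset.sum_congr rfl fun k _ => hterm k]
    rw [Finset.sum_add_distrib, ← Finset.mul_sum, h1, h2]
    ring
  have h2u : (2 : ℚ) ^ u = 2 ^ (u - 1) * 2 := by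
    rw [← pow_succ]; congr 1; omega
  rw [h2u] at hsum
  exact mul_right_cancel₀ (by norm_num) hsum

lemma key_sum_s18 (m t u R : ℕ) (htu : t + u = m) (hu : 1 ≤ u) (hm : m ≤ 2 * R) :
    ∑ r ∈ Icc 1 R, ((2 * r - 1).choose t : ℚ) * (m.choose (2 * r - 1) : ℚ)
      = (m.choose t : ℚ) * 2 ^ (u - 1) := by
  have hstep : ∑ r ∈ Icc 1 R, ((2 * r - 1).choose t : ℚ) * (m.choose (2 * r - 1) : ℚ)
      = ∑ i ∈ range R, ((2 * i + 1).choose t : ℚ) * (m.choose (2 * i + 1) : ℚ) := by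
    refine Finset.sum_nbij' (fun r => r - 1) (fun i => i + 1) ?_ ?_ ?_ ?_ ?_
    · intro a ha; simp only [mem_Icc] at ha; simp only [mem_range]; omega
    · intro a ha; simp only [mem_range] at ha; simp only [mem_Icc]; omega
    · intro a ha; simp only [mem_Icc] at ha; omega
    · intro a ha; omega
    · intro a ha; simp only [mem_Icc] at ha
      have : 2 * a - 1 = 2 * (a - 1) + 1 := by omega
      rw [this]
  rw [hstep]
  have hterm : ∀ i ∈ range R, ((2 * i + 1).choose t : ℚ) * (m.choose (2 * i + 1) : ℚ)
      = (m.choose t : ℚ) *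
        (if t ≤ 2 * i + 1 ∧ 2 * i + 1 ≤ m then (u.choose (2 * i + 1 - t) : ℚ) else 0) := by
    intro i _
    split_ifs with h
    · have hnat := Nat.choose_mul (n := m) h.1
      have hmt : m - t = u := by omega
      rw [hmt] at hnat
      rw [mul_comm]
      exact_mod_cast congrArg (Nat.cast : ℕ → ℚ) hnat
    · push_neg at h
      rcases Nat.lt_or_ge (2 * i + 1) t with h' | h'
      · rw [Nat.choose_eq_zero_of_lt h']; simp
      · rw [Nat.choose_eq_zero_of_lt (h h')]; simp
  rw [Finset.sum_congr rfl hterm, ← Finset.mul_sum]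
  congr 1
  rw [← half_sum_choose u t hu]
  rw [← Finset.sum_filter, ← Finset.sum_filter]
  refine Finset.sum_nbij' (fun i => 2 * i + 1 - t) (fun k => (k + t - 1) / 2) ?_ ?_ ?_ ?_ ?_
  · intro a ha
    simp only [mem_filter, mem_range, Nat.odd_iff] at ha ⊢
    omega
  · intro k hk
    simp only [mem_filter, mem_range, Nat.odd_iff] at hk ⊢
    omega
  · intro a ha
    simp only [mem_filter, mem_range] at ha
    omega
  · intro k hk
    simp only [mem_filter, mem_range, Nat.odd_iff] at hk
    omega
  · intro a ha; rfl

theorem PB_gt (K s s' : ℕ) (hK : 2 ≤ K) (hs' : 1 ≤ s') (hss' : s' < s) (hs : s ≤ K - 1) :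
    ∑ r ∈ Finset.Icc 1 (K - 1),
        ((2 / (2 * (s : ℚ) - 1)) *
            ∑ n ∈ Finset.range (2 * K - 2 * s + 1),
              ((2 * r - 1).choose (2 * K - 2 * s - n + 1) : ℚ) *
                ((n + 2 * s - 2).choose n : ℚ) * bernoulli n) *
          ((2 * K - 2 * s').choose (2 * r - 1) : ℚ) =
      (2 / (2 * (s : ℚ) - 1)) *
        ∑ n ∈ Finset.range (2 * K - 2 * s + 1),
          ((2 * K - 2 * s').choose (2 * s - 2 * s' + n - 1) : ℚ) *
            ((n + 2 * s - 2).choose n : ℚ) * 2 ^ (2 * s - 2 * s' + n - 2) * bernoulli n := by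
  have hstep : ∀ r ∈ Finset.Icc 1 (K - 1),
      ((2 / (2 * (s : ℚ) - 1)) *
            ∑ n ∈ Finset.range (2 * K - 2 * s + 1),
              ((2 * r - 1).choose (2 * K - 2 * s - n + 1) : ℚ) *
                ((n + 2 * s - 2).choose n : ℚ) * bernoulli n) *
          ((2 * K - 2 * s').choose (2 * r - 1) : ℚ)
      = (2 / (2 * (s : ℚ) - 1)) *
          ∑ n ∈ Finset.range (2 * K - 2 * s + 1),
            ((2 * r - 1).choose (2 * K - 2 * s - n + 1) : ℚ) *
              ((n + 2 * s - 2).choose n : ℚ) * bernoulli n *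
              ((2 * K - 2 * s').choose (2 * r - 1) : ℚ) := by
    intro r _
    rw [mul_assoc, Finset.sum_mul]
  rw [Finset.sum_congr rfl hstep, ← Finset.mul_sum, Finset.sum_comm]
  congr 1
  refine Finset.sum_congr rfl fun n hn => ?_
  simp only [mem_range] at hn
  set t := 2 * K - 2 * s - n + 1 with ht
  set u := 2 * s - 2 * s' + n - 1 with huu
  set m := 2 * K - 2 * s' with hm
  have htu : t + u = m := by omega
  have hu1 : 1 ≤ u := by omega
  have hm2 : m ≤ 2 * (K - 1) := by omega
  have hkey := key_sum_s18 m t u (K - 1) htu hu1 hm2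
  have hsymm : (m.choose u : ℚ) = (m.choose t : ℚ) := by
    have : m.choose (m - t) = m.choose t := Nat.choose_symm (by omega)
    rw [show m - t = u by omega] at this
    exact_mod_cast congrArg (Nat.cast : ℕ → ℚ) this
  have hpow : (2 : ℚ) ^ (2 * s - 2 * s' + n - 2) = 2 ^ (u - 1) := by
    rw [show 2 * s - 2 * s' + n - 2 = u - 1 from by omega]
  calc ∑ r ∈ Finset.Icc 1 (K - 1),
        ((2 * r - 1).choose t : ℚ) * ((n + 2 * s - 2).choose n : ℚ) * bernoulli n *
          (m.choose (2 * r - 1) : ℚ)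
      = (∑ r ∈ Finset.Icc 1 (K - 1),
          ((2 * r - 1).choose t : ℚ) * (m.choose (2 * r - 1) : ℚ)) *
          (((n + 2 * s - 2).choose n : ℚ) * bernoulli n) := by
        rw [Finset.sum_mul]; exact Finset.sum_congr rfl fun r _ => by ring
    _ = (m.choose u : ℚ) * ((n + 2 * s - 2).choose n : ℚ) *
          2 ^ (2 * s - 2 * s' + n - 2) * bernoulli n := by
        rw [hkey, hsymm, hpow]
        ring
end
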